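/- arXiv:2508.18011 — 6 statements merged into one kernel-verified Lean document; each statement's English description precedes it below -/
import Mathlib

section
/- Scaling law: let n ≥ 2, λ ≥ 0 (with λ finite), and t > 0 a real number. Then for every set E ⊆ ℝ^n, μ_λ(t • E) = t^n · μ_{λ/t}(E), where t • E = { t·x : x ∈ E } and μ_λ, μ_{λ/t} are the mixed-gauge outer measures with parameters λ and λ/t respectively. -/
open MeasureTheory
open scoped ENNReal Pointwise

/-- The mixed-gauge (method I) outer measure `μ_λ` on `ℝ^n`, built from the gauge
`h_λ(r) = r^n + λ * r^(n-1)` applied to the extended diameter of covering sets. -/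
noncomputable def mixedGauge (n : ℕ) (lam : ℝ≥0∞) :
    OuterMeasure (EuclideanSpace ℝ (Fin n)) :=
  OuterMeasure.boundedBy fun s => (EMetric.diam s) ^ n + lam * (EMetric.diam s) ^ (n - 1)

/-- **Scaling law.** For `n ≥ 2`, finite `λ ≥ 0` and real `t > 0`,
`μ_λ(t • E) = t^n • μ_{λ/t}(E)` for every `E ⊆ ℝ^n`. -/
theorem mixedGauge_smul_set (n : ℕ) (hn : 2 ≤ n) (lam : ℝ≥0∞) (hlam : lam ≠ ∞)
    (t : ℝ) (ht : 0 < t) (E : Set (EuclideanSpace ℝ (Fin n))) :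
    mixedGauge n lam (t • E)
      = (ENNReal.ofReal t) ^ n * mixedGauge n (lam / ENNReal.ofReal t) E := by
  set T := ENNReal.ofReal t with hTdef
  have hT0 : T ≠ 0 := by simp [hTdef, ht]
  have hT' : T ≠ ∞ := ENNReal.ofReal_ne_top
  have hsurj : Function.Surjective (fun x : EuclideanSpace ℝ (Fin n) => t • x) := by
    intro y; exact ⟨t⁻¹ • y, by simp [smul_smul, mul_inv_cancel₀ ht.ne']⟩
  have hsmul : ∀ s : Set (EuclideanSpace ℝ (Fin n)),
      EMetric.diam ((fun x => t • x) '' s) = T * EMetric.diam s := by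
    intro s
    have h1 : (fun x : EuclideanSpace ℝ (Fin n) => t • x) '' s = t • s := Set.image_smul
    rw [h1, show EMetric.diam (t • s) = Metric.ediam (t • s) from rfl, ediam_smul₀, hTdef]
    simp [ENNReal.smul_def, Real.enorm_eq_ofReal ht.le]
    rw [show EMetric.diam s = Metric.ediam s from rfl, ← Real.enorm_eq_ofReal ht.le]
    rfl
  have key : (fun s : Set (EuclideanSpace ℝ (Fin n)) =>
        (EMetric.diam ((fun x => t • x) '' s)) ^ n
          + lam * (EMetric.diam ((fun x => t • x) '' s)) ^ (n - 1))
      = (T ^ n • fun s : Set (EuclideanSpace ℝ (Fin n)) =>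
        (EMetric.diam s) ^ n + (lam / T) * (EMetric.diam s) ^ (n - 1)) := by
    funext s
    simp only [Pi.smul_apply, smul_eq_mul, hsmul s]
    rw [mul_pow, mul_pow, mul_add]
    congr 1
    rw [ENNReal.div_eq_inv_mul]
    have hpow : T ^ n * T⁻¹ = T ^ (n - 1) := by
      conv_lhs => rw [show n = (n - 1) + 1 by omega]
      rw [pow_succ, mul_assoc, ENNReal.mul_inv_cancel hT0 hT', mul_one]
    calc lam * (T ^ (n - 1) * EMetric.diam s ^ (n - 1))
        = (T ^ n * T⁻¹) * (lam * EMetric.diam s ^ (n - 1)) := by rw [hpow]; ring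
      _ = T ^ n * (T⁻¹ * lam * EMetric.diam s ^ (n - 1)) := by ring
  calc mixedGauge n lam (t • E)
      = OuterMeasure.comap (fun x => t • x) (mixedGauge n lam) E := by
        rw [OuterMeasure.comap_apply]; rfl
    _ = OuterMeasure.boundedBy (fun s =>
          (EMetric.diam ((fun x => t • x) '' s)) ^ n
            + lam * (EMetric.diam ((fun x => t • x) '' s)) ^ (n - 1)) E := by
        rw [mixedGauge, OuterMeasure.comap_boundedBy _ (Or.inr hsurj)]
    _ = T ^ n * mixedGauge n (lam / T) E := by
        rw [key, mixedGauge, ← OuterMeasure.smul_boundedBy (ENNReal.pow_ne_top hT')]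
        rfl
end

section
/- Hausdorff content versus Hausdorff measure on Lipschitz graphs: let n ≥ 2 and L ≥ 0, and let f : ℝ^{n-1} → ℝ be an L-Lipschitz function. There exists a constant c(n, L) > 0, depending only on n and L, such that for every subset K of the graph Γ_f = { (y, f(y)) : y ∈ ℝ^{n-1} } ⊆ ℝ^n, one has 𝓗^{n-1}_∞(K) ≥ c(n, L) · 𝓗^{n-1}(K), where 𝓗^{n-1}_∞ is the (n−1)-dimensional Hausdorff content and 𝓗^{n-1} is the (n−1)-dimensional Hausdorff measure on ℝ^n. -/
open MeasureTheory
open scoped ENNReal NNReal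

/-- The `(n-1)`-dimensional Hausdorff content on `ℝ^n`: the method-I outer measure with
gauge `r ↦ r^(n-1)` applied to the extended diameter of covering sets. -/
noncomputable def hausdorffContent (n : ℕ) :
    OuterMeasure (EuclideanSpace ℝ (Fin n)) :=
  OuterMeasure.boundedBy fun s => (EMetric.diam s) ^ (n - 1)

/-- Hausdorff measure of a subset of Euclidean space is controlled by its diameter. -/
private lemma aux_euclid_diam_bound (m : ℕ) (T : Set (EuclideanSpace ℝ (Fin m))) :
    μH[(m : ℝ)] T ≤
      (((m : ℝ≥0) ^ (1 / (2 : ℝ≥0∞)).toReal : ℝ≥0) : ℝ≥0∞) ^ m * EMetric.diam T ^ m := by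
  set A : ℝ≥0 := (m : ℝ≥0) ^ (1 / (2 : ℝ≥0∞)).toReal with hA
  set φ := WithLp.equiv 2 (Fin m → ℝ) with hφ
  have hsymm : LipschitzWith A φ.symm := by
    have h := PiLp.antilipschitzWith_ofLp 2 (fun _ : Fin m => ℝ)
    simpa [hA, hφ] using h.to_rightInverse φ.right_inv
  have hT : T = φ.symm '' (φ '' T) := by
    simp [Set.image_image]
  calc μH[(m : ℝ)] T = μH[(m : ℝ)] (φ.symm '' (φ '' T)) := by rw [← hT]
    _ ≤ (A : ℝ≥0∞) ^ (m : ℝ) * μH[(m : ℝ)] (φ '' T) :=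
        hsymm.hausdorffMeasure_image_le (by positivity) _
    _ = (A : ℝ≥0∞) ^ m * volume (φ '' T) := by
        rw [ENNReal.rpow_natCast]
        congr 1
        rw [show (m : ℝ) = ((Fintype.card (Fin m) : ℕ) : ℝ) by simp,
          hausdorffMeasure_pi_real]
    _ ≤ (A : ℝ≥0∞) ^ m * EMetric.diam (φ '' T) ^ m := by
        gcongr
        simpa [EMetric.diam] using Real.volume_pi_le_diam_pow (φ '' T)
    _ ≤ (A : ℝ≥0∞) ^ m * EMetric.diam T ^ m := by
        gcongr
        exact ((PiLp.lipschitzWith_ofLp 2 (fun _ : Fin m => ℝ)).ediam_image_le T).trans_eq (one_mul _)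

/-- For `n ≥ 2` and an `L`-Lipschitz function `f : ℝ^{n-1} → ℝ`, there is
a constant `c(n,L) > 0` such that for every subset `K` of the graph of `f` (embedded in
`ℝ^n` via the natural isometric identification `ℝ^{n-1} × ℝ ≅ ℝ^n`),
`𝓗^{n-1}_∞(K) ≥ c(n,L) · 𝓗^{n-1}(K)`. -/
theorem hausdorffContent_ge_const_mul_hausdorffMeasure_of_lipschitzGraph
    (n : ℕ) (hn : 2 ≤ n) (L : ℝ≥0) :
    ∃ c : ℝ, 0 < c ∧
      ∀ (f : EuclideanSpace ℝ (Fin (n - 1)) → ℝ), LipschitzWith L f →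
      ∀ (e : WithLp 2 (EuclideanSpace ℝ (Fin (n - 1)) × ℝ) ≃ₗᵢ[ℝ]
            EuclideanSpace ℝ (Fin n))
        (K : Set (EuclideanSpace ℝ (Fin n))),
        K ⊆ Set.range (fun y => e ((WithLp.equiv 2 _).symm (y, f y))) →
        ENNReal.ofReal c * μH[(n - 1 : ℕ)] K ≤ hausdorffContent n K := by
  set m : ℕ := n - 1 with hm
  -- the constants
  set A : ℝ≥0 := (m : ℝ≥0) ^ (1 / (2 : ℝ≥0∞)).toReal with hA
  set B : ℝ≥0 := (2 : ℝ≥0) ^ (1 / (2 : ℝ≥0∞)).toReal with hB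
  set Lg : ℝ≥0 := 1 * (B * max 1 L) with hLg
  set C : ℝ≥0 := Lg ^ m * A ^ m with hC
  refine ⟨((C : ℝ) + 1)⁻¹, by positivity, ?_⟩
  intro f hf e K hK
  set c : ℝ := ((C : ℝ) + 1)⁻¹ with hc
  have hc0 : 0 ≤ c := by positivity
  have hcC : ENNReal.ofReal c * (C : ℝ≥0∞) ≤ 1 := by
    rw [← ENNReal.ofReal_coe_nnreal, ← ENNReal.ofReal_mul hc0, ← ENNReal.ofReal_one]
    apply ENNReal.ofReal_le_ofReal
    rw [hc, inv_mul_le_iff₀ (by positivity), mul_one]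
    linarith [C.coe_nonneg]
  -- the graph map and the projection
  set g : EuclideanSpace ℝ (Fin m) → EuclideanSpace ℝ (Fin n) :=
    fun y => e ((WithLp.equiv 2 _).symm (y, f y)) with hg
  set π : EuclideanSpace ℝ (Fin n) → EuclideanSpace ℝ (Fin m) :=
    fun x => ((WithLp.equiv 2 (EuclideanSpace ℝ (Fin m) × ℝ)) (e.symm x)).1 with hπ
  have hglip : LipschitzWith Lg g := by
    have h1 : LipschitzWith (max 1 L) (fun y : EuclideanSpace ℝ (Fin m) => (y, f y)) :=
      LipschitzWith.id.prodMk hf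
    have h2 : LipschitzWith B
        ((WithLp.equiv 2 (EuclideanSpace ℝ (Fin m) × ℝ)).symm) :=
      (WithLp.prod_antilipschitzWith_ofLp 2 _ _).to_rightInverse
        (WithLp.equiv 2 _).right_inv
    exact e.isometry.lipschitz.comp (h2.comp h1)
  have hπlip : LipschitzWith 1 π := by
    have h := (LipschitzWith.prod_fst (α := EuclideanSpace ℝ (Fin m)) (β := ℝ)).comp
      ((WithLp.prod_lipschitzWith_ofLp 2 (EuclideanSpace ℝ (Fin m)) ℝ).comp
        e.symm.isometry.lipschitz)
    simp only [mul_one] at h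
    exact h
  have hπg : ∀ y, π (g y) = y := by
    intro y; simp [hπ, hg]
  -- key estimate: for any set s, μH (s ∩ K) ≤ C * diam s ^ m
  have key : ∀ s : Set (EuclideanSpace ℝ (Fin n)),
      μH[(m : ℕ)] (s ∩ K) ≤ (C : ℝ≥0∞) * EMetric.diam s ^ m := by
    intro s
    have hsub : s ∩ K ⊆ g '' (π '' (s ∩ K)) := by
      intro x hx
      obtain ⟨y, hy⟩ := hK hx.2
      refine ⟨π x, ⟨x, hx, rfl⟩, ?_⟩
      rw [← hy, hπg]
    have hdiam : EMetric.diam (π '' (s ∩ K)) ≤ EMetric.diam s := by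
      calc EMetric.diam (π '' (s ∩ K)) ≤ 1 * EMetric.diam (s ∩ K) :=
            hπlip.ediam_image_le _
        _ ≤ EMetric.diam s := by
            rw [one_mul]; exact EMetric.diam_mono Set.inter_subset_left
    calc μH[(m : ℕ)] (s ∩ K) ≤ μH[(m : ℕ)] (g '' (π '' (s ∩ K))) :=
          measure_mono hsub
      _ ≤ (Lg : ℝ≥0∞) ^ ((m : ℕ) : ℝ) * μH[(m : ℕ)] (π '' (s ∩ K)) :=
          hglip.hausdorffMeasure_image_le (by positivity) _
      _ ≤ (Lg : ℝ≥0∞) ^ m * ((A : ℝ≥0∞) ^ m * EMetric.diam (π '' (s ∩ K)) ^ m) := by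
          rw [ENNReal.rpow_natCast]
          gcongr
          exact aux_euclid_diam_bound m _
      _ ≤ (Lg : ℝ≥0∞) ^ m * ((A : ℝ≥0∞) ^ m * EMetric.diam s ^ m) := by gcongr
      _ = (C : ℝ≥0∞) * EMetric.diam s ^ m := by
          rw [hC]; push_cast; ring
  -- package as an outer measure and use `le_boundedBy`
  set ν : OuterMeasure (EuclideanSpace ℝ (Fin n)) :=
    ENNReal.ofReal c • (OuterMeasure.restrict K (μH[(m : ℕ)] : Measure _).toOuterMeasure) with hν
  have hν_le : ν ≤ hausdorffContent n := by
    rw [hausdorffContent, OuterMeasure.le_boundedBy]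
    intro s
    have : ν s = ENNReal.ofReal c * μH[(m : ℕ)] (s ∩ K) := by
      simp [hν, OuterMeasure.restrict_apply]
    rw [this, ← hm]
    calc ENNReal.ofReal c * μH[(m : ℕ)] (s ∩ K)
        ≤ ENNReal.ofReal c * ((C : ℝ≥0∞) * EMetric.diam s ^ m) := by
          gcongr; exact key s
      _ = ENNReal.ofReal c * (C : ℝ≥0∞) * EMetric.diam s ^ m := by ring
      _ ≤ 1 * EMetric.diam s ^ m := by gcongr
      _ = EMetric.diam s ^ m := one_mul _
  have := hν_le K
  have hνK : ν K = ENNReal.ofReal c * μH[(m : ℕ)] K := by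
    simp [hν, OuterMeasure.restrict_apply]
  rw [hνK] at this
  exact this
end

section
/- Upper comparability on Lipschitz domains (Theorem 4.1): let n ≥ 2, L > 0, and N ∈ ℕ. There exists a constant C > 0, depending only on n, L and N, such that for every bounded open set Ω ⊆ ℝ^n with Lipschitz boundary of character (L, N) and every real λ > 0, μ_λ(Ω) ≤ C · ( vol(Ω) + λ · 𝓗^{n-1}(∂Ω) ), where vol is Lebesgue measure, ∂Ω = frontier Ω, and 𝓗^{n-1} is the (n−1)-dimensional Hausdorff measure. -/
open MeasureTheory
open scoped ENNReal NNReal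

/-- A set `Ω ⊆ ℝ^n` has Lipschitz boundary of character `(L, N)`: there are `N` open sets
`W j` covering `∂Ω`, and for each `j` a rigid motion (isometry) `g j` of `ℝ^n` and an
`L`-Lipschitz function `f j : ℝ^{n-1} → ℝ` such that, under an isometric identification
`e : ℝ^n ≅ ℝ^{n-1} × ℝ`, the image `g j (Ω)` coincides inside `g j (W j)` with the
subgraph `{ (y, s) : s < f j y }`. -/
def HasLipschitzBoundaryChar (n : ℕ) (L : ℝ≥0) (N : ℕ)
    (Ω : Set (EuclideanSpace ℝ (Fin n))) : Prop :=
  ∃ (e : EuclideanSpace ℝ (Fin n) ≃ₗᵢ[ℝ]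
        WithLp 2 (EuclideanSpace ℝ (Fin (n - 1)) × ℝ))
    (W : Fin N → Set (EuclideanSpace ℝ (Fin n)))
    (g : Fin N → (EuclideanSpace ℝ (Fin n) ≃ᵢ EuclideanSpace ℝ (Fin n)))
    (f : Fin N → EuclideanSpace ℝ (Fin (n - 1)) → ℝ),
    (∀ j, IsOpen (W j)) ∧
    frontier Ω ⊆ ⋃ j, W j ∧
    (∀ j, LipschitzWith L (f j)) ∧
    (∀ j, (g j '' Ω) ∩ (g j '' W j) =
      {x | (WithLp.equiv 2 _ (e x)).2 < f j (WithLp.equiv 2 _ (e x)).1} ∩ (g j '' W j))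

namespace MixedGaugeProof

noncomputable section

variable {N : ℕ}

abbrev E (N : ℕ) := EuclideanSpace ℝ (Fin (N + 1))

def T (N : ℕ) : E N ≃ᵐ (Fin (N + 1) → ℝ) := (MeasurableEquiv.toLp 2 (Fin (N + 1) → ℝ)).symm

lemma T_apply (x : E N) (i : Fin (N + 1)) : T N x i = x i := rfl

lemma T_symm_apply (f : Fin (N + 1) → ℝ) (i : Fin (N + 1)) : (T N).symm f i = f i := rfl

/-- The half-open box in `ℝ^(N+1)` (pi form). -/
def box (t : ℝ) (z : Fin (N + 1) → ℤ) : Set (Fin (N + 1) → ℝ) :=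
  Set.univ.pi fun i => Set.Ico ((z i : ℝ) * t) (((z i : ℝ) + 1) * t)

lemma box_measurable (t : ℝ) (z : Fin (N + 1) → ℤ) : MeasurableSet (box t z) :=
  MeasurableSet.univ_pi fun _ => measurableSet_Ico

/-- The half-open cube in Euclidean space. -/
def cube (t : ℝ) (z : Fin (N + 1) → ℤ) : Set (E N) := T N ⁻¹' box t z

lemma cube_measurable (t : ℝ) (z : Fin (N + 1) → ℤ) : MeasurableSet (cube t z) :=
  (T N).measurable (box_measurable t z)

lemma mem_cube {t : ℝ} {z : Fin (N + 1) → ℤ} {x : E N} :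
    x ∈ cube t z ↔ ∀ i, (z i : ℝ) * t ≤ x i ∧ x i < ((z i : ℝ) + 1) * t := by
  simp [cube, box, Set.mem_pi, T_apply, Set.mem_Ico]

lemma volume_box (t : ℝ) (z : Fin (N + 1) → ℤ) :
    volume (box t z) = ENNReal.ofReal t ^ (N + 1) := by
  rw [box, volume_pi_pi]
  have : ∀ i : Fin (N + 1),
      volume (Set.Ico ((z i : ℝ) * t) (((z i : ℝ) + 1) * t)) = ENNReal.ofReal t := by
    intro i
    rw [Real.volume_Ico]
    congr 1
    ring
  simp only [this, Finset.prod_const, Finset.card_univ, Fintype.card_fin]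

lemma volume_cube (t : ℝ) (z : Fin (N + 1) → ℤ) :
    volume (cube t z) = ENNReal.ofReal t ^ (N + 1) := by
  rw [cube, show T N = (MeasurableEquiv.toLp 2 (Fin (N + 1) → ℝ)).symm from rfl,
    (EuclideanSpace.volume_preserving_symm_measurableEquiv_toLp
      (Fin (N + 1))).measure_preimage (box_measurable t z).nullMeasurableSet]
  exact volume_box t z

lemma dist_le_of_mem_cube {t : ℝ} (ht : 0 ≤ t) {z : Fin (N + 1) → ℤ} {x y : E N}
    (hx : x ∈ cube t z) (hy : y ∈ cube t z) :
    dist x y ≤ Real.sqrt (N + 1) * t := by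
  rw [mem_cube] at hx hy
  have hcoord : ∀ i, dist (x i) (y i) ^ 2 ≤ t ^ 2 := by
    intro i
    have h1 := (hx i).1; have h2 := (hx i).2
    have h3 := (hy i).1; have h4 := (hy i).2
    have : |x i - y i| ≤ t := by
      rw [abs_sub_le_iff]; constructor <;> nlinarith
    calc dist (x i) (y i) ^ 2 = |x i - y i| ^ 2 := by rw [Real.dist_eq]
      _ ≤ t ^ 2 := by nlinarith [abs_nonneg (x i - y i)]
  rw [EuclideanSpace.dist_eq]
  have hsum : (∑ i, dist (x i) (y i) ^ 2) ≤ (N + 1) * t ^ 2 := by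
    calc (∑ i, dist (x i) (y i) ^ 2) ≤ ∑ _i : Fin (N + 1), t ^ 2 :=
          Finset.sum_le_sum fun i _ => hcoord i
      _ = (N + 1) * t ^ 2 := by simp [Finset.sum_const, mul_comm]
  calc Real.sqrt (∑ i, dist (x i) (y i) ^ 2) ≤ Real.sqrt ((N + 1) * t ^ 2) :=
        Real.sqrt_le_sqrt hsum
    _ = Real.sqrt (N + 1) * t := by
        rw [Real.sqrt_mul (by positivity), Real.sqrt_sq ht]

lemma ediam_cube_le {t : ℝ} (ht : 0 ≤ t) (z : Fin (N + 1) → ℤ) :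
    EMetric.diam (cube t z) ≤ ENNReal.ofReal (Real.sqrt (N + 1) * t) := by
  apply EMetric.diam_le
  intro x hx y hy
  rw [edist_dist]
  exact ENNReal.ofReal_le_ofReal (dist_le_of_mem_cube ht hx hy)

/-- index of the cube at scale `t` containing `x`. -/
def idx (t : ℝ) (x : E N) : Fin (N + 1) → ℤ := fun i => ⌊x i / t⌋

lemma mem_cube_idx {t : ℝ} (ht : 0 < t) (x : E N) : x ∈ cube t (idx t x) := by
  rw [mem_cube]
  intro i
  constructor
  · rw [← le_div_iff₀ ht]  -- (⌊x i / t⌋ : ℝ) ≤ x i / t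
    exact Int.floor_le _
  · rw [← div_lt_iff₀ ht]
    exact Int.lt_floor_add_one _

lemma idx_eq_of_mem {t : ℝ} (ht : 0 < t) {z : Fin (N + 1) → ℤ} {x : E N}
    (hx : x ∈ cube t z) : idx t x = z := by
  rw [mem_cube] at hx
  funext i
  have h1 := (hx i).1; have h2 := (hx i).2
  rw [idx, Int.floor_eq_iff]
  constructor
  · rw [le_div_iff₀ ht]; linarith
  · rw [div_lt_iff₀ ht]; push_cast; linarith

/-- The corner point of a cube. -/
def ptc (t : ℝ) (z : Fin (N + 1) → ℤ) : E N := (T N).symm fun i => (z i : ℝ) * t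

lemma ptc_mem {t : ℝ} (ht : 0 < t) (z : Fin (N + 1) → ℤ) : ptc t z ∈ cube t z := by
  rw [mem_cube]
  intro i
  rw [ptc, T_symm_apply]
  exact ⟨le_refl _, by nlinarith⟩

lemma cube_subset_cube {t : ℝ} (ht : 0 < t) {M : ℕ} {z w : Fin (N + 1) → ℤ} {x : E N}
    (hx : x ∈ cube t z) (hx' : x ∈ cube (2 ^ M * t) w) :
    cube t z ⊆ cube (2 ^ M * t) w := by
  rw [mem_cube] at hx hx'
  intro y hy
  rw [mem_cube] at hy ⊢
  intro i
  have hz1 := (hx i).1; have hz2 := (hx i).2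
  have hw1 := (hx' i).1; have hw2 := (hx' i).2
  have hy1 := (hy i).1; have hy2 := (hy i).2
  have hc : ((2 ^ M : ℤ) : ℝ) = (2 : ℝ) ^ M := by push_cast; ring
  -- integer inequalities
  have kle : (w i * 2 ^ M : ℤ) ≤ z i := by
    by_contra hcon
    push_neg at hcon
    have : z i + 1 ≤ w i * 2 ^ M := hcon
    have : ((z i : ℝ) + 1) ≤ (w i : ℝ) * 2 ^ M := by exact_mod_cast this
    nlinarith [pow_pos (by norm_num : (0:ℝ) < 2) M]
  have kri : z i + 1 ≤ (w i + 1) * 2 ^ M := by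
    by_contra hcon
    push_neg at hcon
    have : (w i + 1) * 2 ^ M ≤ z i := by omega
    have : ((w i : ℝ) + 1) * 2 ^ M ≤ (z i : ℝ) := by exact_mod_cast this
    nlinarith [pow_pos (by norm_num : (0:ℝ) < 2) M]
  constructor
  · have : ((w i : ℝ) * 2 ^ M) ≤ (z i : ℝ) := by exact_mod_cast kle
    nlinarith
  · have : ((z i : ℝ) + 1) ≤ ((w i : ℝ) + 1) * 2 ^ M := by exact_mod_cast kri
    nlinarith




/-- connected set meeting an open set and its complement meets the frontier -/
lemma cross_frontier {S Ω : Set (E N)} (hS : IsPreconnected S) (hΩ : IsOpen Ω)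
    (h1 : (S ∩ Ω).Nonempty) (h2 : (S \ Ω).Nonempty) : (S ∩ frontier Ω).Nonempty := by
  by_contra hcon
  rw [Set.not_nonempty_iff_eq_empty] at hcon
  have hfr : frontier Ω = closure Ω \ Ω := hΩ.frontier_eq
  have hsub : S ⊆ Ω ∪ (closure Ω)ᶜ := by
    intro x hx
    by_cases hxo : x ∈ Ω
    · exact Or.inl hxo
    · right
      intro hxc
      have : x ∈ S ∩ frontier Ω := ⟨hx, by rw [hfr]; exact ⟨hxc, hxo⟩⟩
      simp [hcon] at this
  have h2' : (S ∩ (closure Ω)ᶜ).Nonempty := by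
    obtain ⟨x, hxS, hxΩ⟩ := h2
    refine ⟨x, hxS, ?_⟩
    intro hxc
    have : x ∈ S ∩ frontier Ω := ⟨hxS, by rw [hfr]; exact ⟨hxc, hxΩ⟩⟩
    simp [hcon] at this
  obtain ⟨x, hx⟩ := hS Ω (closure Ω)ᶜ hΩ (isClosed_closure.isOpen_compl) hsub h1 h2'
  exact absurd (subset_closure hx.2.1) hx.2.2

/-- the staircase path points -/
def stairPt (x x' : E N) (j : ℕ) : E N :=
  (MeasurableEquiv.toLp 2 (Fin (N + 1) → ℝ)) fun i => if (i : ℕ) < j then x' i else x i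

lemma stairPt_apply (x x' : E N) (j : ℕ) (i : Fin (N + 1)) :
    stairPt x x' j i = if (i : ℕ) < j then x' i else x i := rfl

lemma stairPt_zero (x x' : E N) : stairPt x x' 0 = x := by
  ext i; simp [stairPt_apply]

lemma stairPt_last (x x' : E N) : stairPt x x' (N + 1) = x' := by
  ext i; simp [stairPt_apply, i.isLt]

/-- chain of segments is preconnected -/
lemma chain_preconnected (p : ℕ → E N) (M : ℕ) :
    IsPreconnected (⋃ j ∈ Finset.range (M + 1), segment ℝ (p j) (p (j + 1))) := by
  induction M with
  | zero => simpa using (convex_segment (p 0) (p 1)).isPreconnected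
  | succ M ih =>
      have : (⋃ j ∈ Finset.range (M + 2), segment ℝ (p j) (p (j + 1))) =
          (⋃ j ∈ Finset.range (M + 1), segment ℝ (p j) (p (j + 1))) ∪
            segment ℝ (p (M + 1)) (p (M + 2)) := by
        rw [Finset.range_add_one]
        simp [Set.biUnion_insert, Set.union_comm]
      rw [this]
      apply IsPreconnected.union (p (M + 1))
      · exact Set.mem_biUnion (Finset.self_mem_range_succ M) (right_mem_segment ℝ _ _)
      · exact left_mem_segment ℝ _ _
      · exact ih
      · exact (convex_segment _ _).isPreconnected

/-- Each coordinate map is 1-Lipschitz on Euclidean space. -/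
lemma coord_dist_le (x y : E N) (i : Fin (N + 1)) : dist (x i) (y i) ≤ dist x y := by
  rw [EuclideanSpace.dist_eq]
  have h : dist (x i) (y i) = Real.sqrt (dist (x i) (y i) ^ 2) :=
    (Real.sqrt_sq dist_nonneg).symm
  rw [h]
  apply Real.sqrt_le_sqrt
  exact Finset.single_le_sum (f := fun i => dist (x i) (y i) ^ 2)
    (fun _ _ => sq_nonneg _) (Finset.mem_univ i)

/-- Projection forgetting the `m`-th coordinate. -/
def proj (m : Fin (N + 1)) (x : E N) : Fin N → ℝ := fun j => x (m.succAbove j)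

lemma proj_lipschitz (m : Fin (N + 1)) : LipschitzWith 1 (proj (N := N) m) := by
  apply LipschitzWith.mk_one
  intro x y
  rw [dist_pi_le_iff dist_nonneg]
  intro j
  exact coord_dist_le x y (m.succAbove j)

/-- Mixed tuple extracted from a crossing of the staircase path. -/
def mix (m : Fin (N + 1)) (x x' : E N) : Fin N → ℝ :=
  fun j => if m.succAbove j < m then x' (m.succAbove j) else x (m.succAbove j)

lemma exists_cross {Ω : Set (E N)} (hΩ : IsOpen Ω) {t : ℝ} {z : Fin (N + 1) → ℤ} {x x' : E N}
    (hx : x ∈ Ω) (hxQ : x ∈ cube t z) (hx' : x' ∉ Ω) (hx'Q : x' ∈ cube t z) :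
    ∃ m : Fin (N + 1), mix m x x' ∈ proj m '' (frontier Ω ∩ cube t z) := by
  classical
  set p : ℕ → E N := stairPt x x' with hp
  set S := ⋃ j ∈ Finset.range (N + 1), segment ℝ (p j) (p (j + 1)) with hS
  have hSconn : IsPreconnected S := chain_preconnected p N
  have hxS : x ∈ S := by
    have h0 : p 0 ∈ S := Set.mem_biUnion (Finset.mem_range.2 (Nat.succ_pos N))
      (left_mem_segment ℝ _ _)
    rwa [hp, stairPt_zero] at h0
  have hx'S : x' ∈ S := by
    have h0 : p (N + 1) ∈ S := Set.mem_biUnion (Finset.self_mem_range_succ N)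
      (right_mem_segment ℝ _ _)
    rwa [hp, stairPt_last] at h0
  obtain ⟨b, hbS, hbF⟩ := cross_frontier hSconn hΩ ⟨x, hxS, hx⟩ ⟨x', hx'S, hx'⟩
  simp only [hS, Set.mem_iUnion] at hbS
  obtain ⟨j, hjmem, hbseg⟩ := hbS
  have hj : j < N + 1 := Finset.mem_range.1 hjmem
  obtain ⟨a, c, ha, hc, hac, hb⟩ := hbseg
  have hbcoord : ∀ i : Fin (N + 1), b i = a * p j i + c * p (j + 1) i := by
    intro i
    rw [← hb]
    rfl
  have hlt : ∀ i : Fin (N + 1), (i : ℕ) < j → b i = x' i := by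
    intro i hi
    rw [hbcoord i, hp, stairPt_apply, stairPt_apply, if_pos hi,
      if_pos (Nat.lt_succ_of_lt hi)]
    linear_combination (x' i) * hac
  have hgt : ∀ i : Fin (N + 1), j < (i : ℕ) → b i = x i := by
    intro i hi
    rw [hbcoord i, hp, stairPt_apply, stairPt_apply, if_neg (by omega), if_neg (by omega)]
    linear_combination (x i) * hac
  set m : Fin (N + 1) := ⟨j, hj⟩ with hm
  have hbm : b m = a * x m + c * x' m := by
    rw [hbcoord m, hp, stairPt_apply, stairPt_apply, if_neg (by simp [hm]),
      if_pos (by simp [hm])]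
  have hbQ : b ∈ cube t z := by
    rw [mem_cube]
    intro i
    rcases lt_trichotomy (i : ℕ) j with hij | hij | hij
    · rw [hlt i hij]; exact (mem_cube.1 hx'Q) i
    · have hiem : i = m := by apply Fin.ext; simp [hm, hij]
      rw [hiem, hbm]
      have h1 := (mem_cube.1 hxQ) m
      have h2 := (mem_cube.1 hx'Q) m
      have hsplit1 : a * ((z m : ℝ) * t) + c * ((z m : ℝ) * t) = (z m : ℝ) * t := by
        linear_combination ((z m : ℝ) * t) * hac
      have hsplit2 : a * (((z m : ℝ) + 1) * t) + c * (((z m : ℝ) + 1) * t)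
          = ((z m : ℝ) + 1) * t := by
        linear_combination (((z m : ℝ) + 1) * t) * hac
      constructor
      · nlinarith [hsplit1, mul_le_mul_of_nonneg_left h1.1 ha,
          mul_le_mul_of_nonneg_left h2.1 hc]
      · by_cases hA : a = 0
        · have hc1 : c = 1 := by linarith
          rw [hA, hc1]; simpa using h2.2
        · have hapos : 0 < a := lt_of_le_of_ne ha (Ne.symm hA)
          nlinarith [hsplit2, mul_pos hapos (sub_pos.2 h1.2),
            mul_nonneg hc (sub_nonneg.2 h2.2.le)]
    · rw [hgt i hij]; exact (mem_cube.1 hxQ) i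
  refine ⟨m, b, ⟨hbF, hbQ⟩, ?_⟩
  funext j'
  have hine : m.succAbove j' ≠ m := Fin.succAbove_ne m j'
  rcases lt_or_gt_of_ne hine with hcase | hcase
  · simp only [proj, mix]
    rw [if_pos hcase, hlt _ (by simpa [hm, Fin.lt_def] using hcase)]
  · simp only [proj, mix]
    rw [if_neg (not_lt_of_gt hcase), hgt _ (by simpa [hm, Fin.lt_def] using hcase)]

/-- Measure of a "cylinder over `C` with box constraints on the free coordinates". -/
lemma cylinder_eq {ι κ : Type*} [Fintype ι] [Fintype κ] (ρ : κ → ι)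
    (hρ : Function.Injective ρ) (C : Set (κ → ℝ)) (hC : MeasurableSet C)
    (lo hi : ι → ℝ) (t : ℝ) (hlen : ∀ i, hi i - lo i = t) :
    (volume : Measure (ι → ℝ))
        {w | (fun k => w (ρ k)) ∈ C ∧ ∀ i, i ∉ Set.range ρ → w i ∈ Set.Ico (lo i) (hi i)}
      = volume C * ENNReal.ofReal t ^ (Fintype.card ι - Fintype.card κ) := by
  classical
  set s : Set ι := Set.range ρ with hs
  let e : κ ⊕ (↥sᶜ) ≃ ι :=
    (Equiv.sumCongr (Equiv.ofInjective ρ hρ) (Equiv.refl _)).trans (Equiv.Set.sumCompl s)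
  have he1 : ∀ k, e (Sum.inl k) = ρ k := by
    intro k; simp [e]
  have he2 : ∀ i : ↥(sᶜ), e (Sum.inr i) = (i : ι) := by
    intro i; simp [e]
  set ψ : ((κ → ℝ) × (↥(sᶜ) → ℝ)) → (ι → ℝ) := fun p =>
    Equiv.piCongrLeft (fun _ => ℝ) e ((Equiv.sumPiEquivProdPi (fun _ => ℝ)).symm p)
    with hψdef
  have hψ : MeasurePreserving ψ volume volume := by
    have h1 := volume_measurePreserving_sumPiEquivProdPi_symm (fun _ : κ ⊕ ↥(sᶜ) => ℝ)
    have h2 := volume_measurePreserving_piCongrLeft (fun _ : ι => ℝ) e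
    have := h2.comp h1
    convert this using 1
    rfl
  set Sset : Set (ι → ℝ) :=
    {w | (fun k => w (ρ k)) ∈ C ∧ ∀ i, i ∉ s → w i ∈ Set.Ico (lo i) (hi i)} with hSset
  have hmeas : MeasurableSet Sset := by
    have h1 : MeasurableSet {w : ι → ℝ | (fun k => w (ρ k)) ∈ C} :=
      (measurable_pi_lambda _ fun k => measurable_pi_apply (ρ k)) hC
    have h2 : MeasurableSet {w : ι → ℝ | ∀ i, i ∉ s → w i ∈ Set.Ico (lo i) (hi i)} := by
      have : {w : ι → ℝ | ∀ i, i ∉ s → w i ∈ Set.Ico (lo i) (hi i)} =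
          ⋂ i, ⋂ (_ : i ∉ s), (fun w : ι → ℝ => w i) ⁻¹' Set.Ico (lo i) (hi i) := by
        ext w; simp
      rw [this]
      exact MeasurableSet.iInter fun i => MeasurableSet.iInter fun _ =>
        (measurable_pi_apply i) measurableSet_Ico
    exact h1.inter h2
  have hval1 : ∀ (f : κ → ℝ) (g : ↥(sᶜ) → ℝ) (k : κ), ψ (f, g) (ρ k) = f k := by
    intro f g k
    rw [hψdef]
    simp only
    rw [← he1 k]
    exact Equiv.piCongrLeft_sumInl (fun _ => ℝ) e f g k
  have hval2 : ∀ (f : κ → ℝ) (g : ↥(sᶜ) → ℝ) (i : ↥(sᶜ)), ψ (f, g) (i : ι) = g i := by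
    intro f g i
    rw [hψdef]
    simp only
    rw [← he2 i]
    exact Equiv.piCongrLeft_sumInr (fun _ => ℝ) e f g i
  have hpre : ψ ⁻¹' Sset = C ×ˢ (Set.univ.pi fun i : ↥(sᶜ) => Set.Ico (lo i) (hi i)) := by
    ext ⟨f, g⟩
    simp only [Set.mem_preimage, hSset, Set.mem_setOf_eq, Set.mem_prod, Set.mem_pi,
      Set.mem_univ, forall_true_left]
    constructor
    · rintro ⟨hC', hbox⟩
      constructor
      · have : (fun k => ψ (f, g) (ρ k)) = f := funext fun k => hval1 f g k
        rwa [this] at hC'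
      · intro i
        have := hbox (i : ι) i.2
        rwa [hval2 f g i] at this
    · rintro ⟨hC', hbox⟩
      constructor
      · have : (fun k => ψ (f, g) (ρ k)) = f := funext fun k => hval1 f g k
        rw [this]; exact hC'
      · intro i hi'
        have h2' := hbox ⟨i, hi'⟩
        have h3' : ψ (f, g) i = g ⟨i, hi'⟩ := hval2 f g ⟨i, hi'⟩
        rw [h3']
        exact h2'
  have hcard : Fintype.card ↥(sᶜ) = Fintype.card ι - Fintype.card κ := by
    rw [Fintype.card_compl_set]
    have h := Set.card_range_of_injective (f := ρ) hρ
    simp only [hs]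
    omega
  calc (volume : Measure (ι → ℝ)) Sset
      = volume (ψ ⁻¹' Sset) := (hψ.measure_preimage hmeas.nullMeasurableSet).symm
    _ = volume (C ×ˢ (Set.univ.pi fun i : ↥(sᶜ) => Set.Ico (lo i) (hi i))) := by rw [hpre]
    _ = volume C * volume (Set.univ.pi fun i : ↥(sᶜ) => Set.Ico (lo i) (hi i)) := by
        rw [Measure.volume_eq_prod, Measure.prod_prod]
    _ = volume C * ENNReal.ofReal t ^ (Fintype.card ι - Fintype.card κ) := by
        rw [volume_pi_pi]
        congr 1
        have : ∀ i : ↥(sᶜ), volume (Set.Ico (lo (i : ι)) (hi (i : ι))) = ENNReal.ofReal t := by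
          intro i
          rw [Real.volume_Ico, hlen]
        rw [Finset.prod_congr rfl fun i _ => this i, Finset.prod_const, Finset.card_univ, hcard]

lemma cylinder_measurableSet {ι κ : Type*} [Fintype ι] [Fintype κ] (ρ : κ → ι)
    (C : Set (κ → ℝ)) (hC : MeasurableSet C) (lo hi : ι → ℝ) :
    MeasurableSet {w : ι → ℝ | (fun k => w (ρ k)) ∈ C ∧
      ∀ i, i ∉ Set.range ρ → w i ∈ Set.Ico (lo i) (hi i)} := by
  classical
  have h1 : MeasurableSet {w : ι → ℝ | (fun k => w (ρ k)) ∈ C} :=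
    (measurable_pi_lambda _ fun k => measurable_pi_apply (ρ k)) hC
  have h2 : MeasurableSet {w : ι → ℝ | ∀ i, i ∉ Set.range ρ → w i ∈ Set.Ico (lo i) (hi i)} := by
    have : {w : ι → ℝ | ∀ i, i ∉ Set.range ρ → w i ∈ Set.Ico (lo i) (hi i)} =
        ⋂ i, ⋂ (_ : i ∉ Set.range ρ), (fun w : ι → ℝ => w i) ⁻¹' Set.Ico (lo i) (hi i) := by
      ext w; simp
    rw [this]
    exact MeasurableSet.iInter fun i => MeasurableSet.iInter fun _ =>
      (measurable_pi_apply i) measurableSet_Ico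
  exact h1.inter h2

/-- The staircase/Fubini inequality: the product of the volumes of `Ω ∩ Q` and `Q \ Ω`
is controlled by the `(N)`-dimensional Hausdorff measure of `∂Ω ∩ Q`. -/
lemma stair {Ω : Set (E N)} (hΩ : IsOpen Ω) {t : ℝ} (ht : 0 < t) (z : Fin (N + 1) → ℤ) :
    volume (Ω ∩ cube t z) * volume (cube t z \ Ω)
      ≤ (N + 1 : ℝ≥0∞) * μH[(N : ℝ)] (frontier Ω ∩ cube t z) * ENNReal.ofReal t ^ (N + 2) := by
  classical
  set Q := cube t z with hQ
  set Fr := frontier Ω ∩ Q with hFr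
  set B : Fin (N + 1) → Set (Fin N → ℝ) := fun m => proj m '' Fr with hB
  set Cm : Fin (N + 1) → Set (Fin N → ℝ) := fun m => toMeasurable volume (B m) with hCm
  have hBvol : ∀ m, (volume : Measure (Fin N → ℝ)) (Cm m) ≤ μH[(N : ℝ)] Fr := by
    intro m
    rw [hCm]
    rw [measure_toMeasurable]
    have hpi : (volume : Measure (Fin N → ℝ)) (B m) = μH[(N : ℝ)] (B m) := by
      rw [← hausdorffMeasure_pi_real (ι := Fin N)]
      simp [Fintype.card_fin]
    rw [hpi, hB]
    have := (proj_lipschitz (N := N) m).hausdorffMeasure_image_le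
      (d := (N : ℝ)) (by positivity) Fr
    simpa using this
  -- sum space
  have hT := EuclideanSpace.volume_preserving_symm_measurableEquiv_toLp (Fin (N + 1))
  have h1 : MeasurePreserving (Prod.map (T N) (T N))
      (volume : Measure (E N × E N)) volume := by
    have := hT.prod hT
    rwa [← Measure.volume_eq_prod, ← Measure.volume_eq_prod] at this
  have h2 := volume_measurePreserving_sumPiEquivProdPi_symm
    (fun _ : Fin (N + 1) ⊕ Fin (N + 1) => ℝ)
  have hΨ : MeasurePreserving
      ((MeasurableEquiv.sumPiEquivProdPi (fun _ : Fin (N + 1) ⊕ Fin (N + 1) => ℝ)).symm ∘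
        Prod.map (T N) (T N)) (volume : Measure (E N × E N)) volume := h2.comp h1
  set Ψ : E N × E N → (Fin (N + 1) ⊕ Fin (N + 1) → ℝ) :=
    (MeasurableEquiv.sumPiEquivProdPi (fun _ : Fin (N + 1) ⊕ Fin (N + 1) => ℝ)).symm ∘
      Prod.map (T N) (T N) with hΨdef
  have hΨapp_l : ∀ (p : E N × E N) (i : Fin (N + 1)), Ψ p (Sum.inl i) = p.1 i := by
    intro p i
    simp [hΨdef, MeasurableEquiv.coe_sumPiEquivProdPi_symm, Equiv.sumPiEquivProdPi_symm_apply,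
      T_apply]
  have hΨapp_r : ∀ (p : E N × E N) (i : Fin (N + 1)), Ψ p (Sum.inr i) = p.2 i := by
    intro p i
    simp [hΨdef, MeasurableEquiv.coe_sumPiEquivProdPi_symm, Equiv.sumPiEquivProdPi_symm_apply,
      T_apply]
  -- directions
  set ρm : Fin (N + 1) → Fin N → Fin (N + 1) ⊕ Fin (N + 1) := fun m j =>
    if m.succAbove j < m then Sum.inr (m.succAbove j) else Sum.inl (m.succAbove j) with hρm
  have hρinj : ∀ m, Function.Injective (ρm m) := by
    intro m j j' h
    rw [hρm] at h
    simp only at h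
    split_ifs at h with h1' h2' h2' <;>
      first
        | exact Fin.succAbove_right_injective (Sum.inr.inj h)
        | exact Fin.succAbove_right_injective (Sum.inl.inj h)
        | exact absurd h (by simp)
  set lo : Fin (N + 1) ⊕ Fin (N + 1) → ℝ :=
    Sum.elim (fun i => (z i : ℝ) * t) (fun i => (z i : ℝ) * t) with hlo
  set hi : Fin (N + 1) ⊕ Fin (N + 1) → ℝ :=
    Sum.elim (fun i => ((z i : ℝ) + 1) * t) (fun i => ((z i : ℝ) + 1) * t) with hhi
  have hlen : ∀ i, hi i - lo i = t := by
    rintro (i | i) <;> (simp [hlo, hhi]; ring)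
  set Sm : Fin (N + 1) → Set (Fin (N + 1) ⊕ Fin (N + 1) → ℝ) := fun m =>
    {w | (fun k => w (ρm m k)) ∈ Cm m ∧ ∀ i, i ∉ Set.range (ρm m) →
      w i ∈ Set.Ico (lo i) (hi i)} with hSm
  -- inclusion of the product set into the union of the cross sets
  have hincl : (Ω ∩ Q) ×ˢ (Q \ Ω) ⊆ ⋃ m : Fin (N + 1), Ψ ⁻¹' (Sm m) := by
    rintro ⟨x, x'⟩ ⟨⟨hxΩ, hxQ⟩, hx'Q, hx'Ω⟩
    obtain ⟨m, hm⟩ := exists_cross hΩ hxΩ hxQ hx'Ω hx'Q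
    refine Set.mem_iUnion.2 ⟨m, ?_⟩
    rw [Set.mem_preimage, hSm]
    constructor
    · have hfun : (fun k => Ψ (x, x') (ρm m k)) = mix m x x' := by
        funext k
        rw [hρm]
        simp only
        rw [mix]
        split_ifs with hcase
        · exact hΨapp_r (x, x') _
        · exact hΨapp_l (x, x') _
      rw [hfun]
      exact subset_toMeasurable _ _ hm
    · rintro (i | i) _
      · rw [hΨapp_l]
        simp only [hlo, hhi, Sum.elim_inl]
        exact (mem_cube.1 hxQ) i
      · rw [hΨapp_r]
        simp only [hlo, hhi, Sum.elim_inr]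
        exact (mem_cube.1 hx'Q) i
  -- measure estimates
  have hcard : Fintype.card (Fin (N + 1) ⊕ Fin (N + 1)) - Fintype.card (Fin N) = N + 2 := by
    simp [Fintype.card_sum, Fintype.card_fin]
    omega
  have hvolSm : ∀ m, (volume : Measure (Fin (N + 1) ⊕ Fin (N + 1) → ℝ)) (Sm m)
      ≤ μH[(N : ℝ)] Fr * ENNReal.ofReal t ^ (N + 2) := by
    intro m
    rw [hSm]
    have := cylinder_eq (ρm m) (hρinj m) (Cm m) (measurableSet_toMeasurable _ _) lo hi t hlen
    rw [this, hcard]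
    exact mul_le_mul_left (hBvol m) _
  have hmeasSm : ∀ m, MeasurableSet (Sm m) := fun m =>
    cylinder_measurableSet (ρm m) (Cm m) (measurableSet_toMeasurable _ _) lo hi
  calc volume (Ω ∩ Q) * volume (Q \ Ω)
      = volume ((Ω ∩ Q) ×ˢ (Q \ Ω)) := by
        rw [Measure.volume_eq_prod, Measure.prod_prod]
    _ ≤ volume (⋃ m : Fin (N + 1), Ψ ⁻¹' (Sm m)) := measure_mono hincl
    _ ≤ ∑ m : Fin (N + 1), volume (Ψ ⁻¹' (Sm m)) := measure_iUnion_fintype_le _ _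
    _ = ∑ m : Fin (N + 1), volume (Sm m) := by
        refine Finset.sum_congr rfl fun m _ => ?_
        exact hΨ.measure_preimage (hmeasSm m).nullMeasurableSet
    _ ≤ ∑ _m : Fin (N + 1), μH[(N : ℝ)] Fr * ENNReal.ofReal t ^ (N + 2) :=
        Finset.sum_le_sum fun m _ => hvolSm m
    _ = (N + 1 : ℝ≥0∞) * μH[(N : ℝ)] Fr * ENNReal.ofReal t ^ (N + 2) := by
        rw [Finset.sum_const, Finset.card_univ, Fintype.card_fin, nsmul_eq_mul]
        push_cast
        ring

/-- The smallness threshold. -/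
def bconst (N : ℕ) : ℝ := 1 / 2 ^ (N + 3)

/-- The richness threshold. -/
def cconst (N : ℕ) : ℝ := bconst N * (1 - bconst N) / (N + 1)

lemma bconst_pos : 0 < bconst N := by
  rw [bconst]; positivity

lemma bconst_le : bconst N ≤ 1 / 8 := by
  rw [bconst]
  rw [div_le_div_iff₀ (by positivity) (by norm_num)]
  have : (8 : ℝ) = 2 ^ 3 := by norm_num
  nlinarith [pow_le_pow_right₀ (by norm_num : (1:ℝ) ≤ 2) (by omega : 3 ≤ N + 3)]

lemma cconst_pos : 0 < cconst N := by
  rw [cconst]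
  have h1 := bconst_pos (N := N)
  have h2 := bconst_le (N := N)
  have : (0:ℝ) < N + 1 := by positivity
  apply div_pos (mul_pos h1 (by linarith)) this

/-- The volume dichotomy for "poor" cubes. -/
lemma dichotomy {Ω : Set (E N)} (hΩ : IsOpen Ω) {t : ℝ} (ht : 0 < t) (z : Fin (N + 1) → ℤ)
    (hpoor : μH[(N : ℝ)] (frontier Ω ∩ cube t z) < ENNReal.ofReal (cconst N * t ^ N)) :
    volume (Ω ∩ cube t z) ≤ ENNReal.ofReal (bconst N * t ^ (N + 1)) ∨
      ENNReal.ofReal ((1 - bconst N) * t ^ (N + 1)) ≤ volume (Ω ∩ cube t z) := by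
  classical
  set Q := cube t z with hQdef
  have hvolQ : volume Q = ENNReal.ofReal (t ^ (N + 1)) := by
    rw [hQdef, volume_cube, ENNReal.ofReal_pow ht.le]
  have hQfin : volume Q ≠ ∞ := by rw [hvolQ]; exact ENNReal.ofReal_ne_top
  have hAle : volume (Ω ∩ Q) ≤ volume Q := measure_mono Set.inter_subset_right
  have hA'le : volume (Q \ Ω) ≤ volume Q := measure_mono Set.diff_subset
  have hAfin : volume (Ω ∩ Q) ≠ ∞ := ne_top_of_le_ne_top hQfin hAle
  have hA'fin : volume (Q \ Ω) ≠ ∞ := ne_top_of_le_ne_top hQfin hA'le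
  set a := (volume (Ω ∩ Q)).toReal with ha
  set a' := (volume (Q \ Ω)).toReal with ha'
  have hsum : a + a' = t ^ (N + 1) := by
    rw [ha, ha', ← ENNReal.toReal_add hAfin hA'fin, Set.inter_comm,
      measure_inter_add_diff Q hΩ.measurableSet, hvolQ,
      ENNReal.toReal_ofReal (by positivity)]
  have hann : 0 ≤ a := ENNReal.toReal_nonneg
  have ha'nn : 0 ≤ a' := ENNReal.toReal_nonneg
  -- Hausdorff measure is finite here
  have hμfin : μH[(N : ℝ)] (frontier Ω ∩ Q) ≠ ∞ :=
    ne_top_of_le_ne_top ENNReal.ofReal_ne_top hpoor.le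
  have hμreal : (μH[(N : ℝ)] (frontier Ω ∩ Q)).toReal ≤ cconst N * t ^ N := by
    have := ENNReal.toReal_mono ENNReal.ofReal_ne_top hpoor.le
    rwa [ENNReal.toReal_ofReal (mul_nonneg (cconst_pos (N := N)).le (by positivity))] at this
  have hkey := stair hΩ ht z
  have hprod : a * a' ≤ (N + 1) * (cconst N * t ^ N) * t ^ (N + 2) := by
    have hfinR : ((N : ℝ≥0∞) + 1) * μH[(N : ℝ)] (frontier Ω ∩ Q) *
        ENNReal.ofReal t ^ (N + 2) ≠ ∞ := by
      apply ENNReal.mul_ne_top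
      apply ENNReal.mul_ne_top
      · simp
      · exact hμfin
      · exact ENNReal.pow_ne_top ENNReal.ofReal_ne_top
    have h1 : (volume (Ω ∩ Q) * volume (Q \ Ω)).toReal ≤
        (((N : ℝ≥0∞) + 1) * μH[(N : ℝ)] (frontier Ω ∩ Q) *
          ENNReal.ofReal t ^ (N + 2)).toReal :=
      ENNReal.toReal_mono hfinR hkey
    rw [ENNReal.toReal_mul] at h1
    rw [ENNReal.toReal_mul, ENNReal.toReal_mul, ENNReal.toReal_pow,
      ENNReal.toReal_ofReal ht.le] at h1
    have hS : ((N : ℝ≥0∞) + 1).toReal = (N : ℝ) + 1 := by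
      rw [ENNReal.toReal_add (by simp) (by simp)]; simp
    rw [hS] at h1
    calc a * a' ≤ ((N : ℝ) + 1) * (μH[(N : ℝ)] (frontier Ω ∩ Q)).toReal * t ^ (N + 2) := h1
      _ ≤ (N + 1) * (cconst N * t ^ N) * t ^ (N + 2) := by
          apply mul_le_mul_of_nonneg_right _ (by positivity)
          apply mul_le_mul_of_nonneg_left hμreal (by positivity)
  have hident : ((N : ℝ) + 1) * cconst N = bconst N * (1 - bconst N) := by
    rw [cconst]
    field_simp
  have hb := bconst_pos (N := N)
  have hble := bconst_le (N := N)
  have hT : (0 : ℝ) < t ^ (N + 1) := by positivity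
  -- real dichotomy
  have hreal : a ≤ bconst N * t ^ (N + 1) ∨ (1 - bconst N) * t ^ (N + 1) ≤ a := by
    by_contra hcon
    push_neg at hcon
    obtain ⟨h1, h2⟩ := hcon
    have hquad : a * a' ≤ bconst N * (1 - bconst N) * (t ^ (N + 1) * t ^ (N + 1)) := by
      calc a * a' ≤ (N + 1) * (cconst N * t ^ N) * t ^ (N + 2) := hprod
        _ = ((N : ℝ) + 1) * cconst N * (t ^ N * t ^ (N + 2)) := by ring
        _ = bconst N * (1 - bconst N) * (t ^ (N + 1) * t ^ (N + 1)) := by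
            rw [hident]; ring
    nlinarith [mul_pos (sub_pos.2 h1) (sub_pos.2 h2)]
  rcases hreal with h | h
  · left
    rw [ha] at h
    calc volume (Ω ∩ Q) = ENNReal.ofReal a := by
          rw [ha, ENNReal.ofReal_toReal hAfin]
      _ ≤ ENNReal.ofReal (bconst N * t ^ (N + 1)) := ENNReal.ofReal_le_ofReal h
  · right
    calc ENNReal.ofReal ((1 - bconst N) * t ^ (N + 1)) ≤ ENNReal.ofReal a :=
          ENNReal.ofReal_le_ofReal h
      _ = volume (Ω ∩ Q) := by rw [ha, ENNReal.ofReal_toReal hAfin]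

/-- The final constant. -/
def Cconst (N : ℕ) : ℝ :=
  (Real.sqrt (N + 1) ^ (N + 1) + Real.sqrt (N + 1) ^ N) * (1 / cconst N + 2)

lemma Cconst_pos : 0 < Cconst N := by
  have h1 : (0:ℝ) < Real.sqrt (N + 1) := Real.sqrt_pos.2 (by positivity)
  have h2 := cconst_pos (N := N)
  rw [Cconst]
  positivity

lemma tsum_subtype_measure_biUnion_le {X : Type*} [MeasurableSpace X] (μ : Measure X)
    {ι : Type*} [Countable ι] {L : Set ι} (f : ι → Set X)
    (hd : L.PairwiseDisjoint f) (hm : ∀ q ∈ L, MeasurableSet (f q)) {A : Set X}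
    (hsub : ∀ q ∈ L, f q ⊆ A) :
    (∑' q : ↥L, μ (f q)) ≤ μ A := by
  have hL : L.Countable := Set.to_countable L
  rw [← measure_biUnion hL hd (fun q hq => hm q hq)]
  exact measure_mono (Set.iUnion₂_subset hsub)

/-- Main covering bound in the `(N+1)`-dimensional formulation. -/
lemma main_bound {Ω : Set (E N)} (hΩ : IsOpen Ω)
    {lam : ℝ} (hlam : 0 < lam) :
    OuterMeasure.boundedBy
        (fun s : Set (E N) => EMetric.diam s ^ (N + 1) +
          ENNReal.ofReal lam * EMetric.diam s ^ N) Ω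
      ≤ ENNReal.ofReal (Cconst N) *
        (volume Ω + ENNReal.ofReal lam * μH[(N : ℝ)] (frontier Ω)) := by
  classical
  set tk : ℕ → ℝ := fun k => lam / 2 ^ k with htk
  have htkpos : ∀ k, 0 < tk k := fun k => by rw [htk]; positivity
  have htklam : ∀ k, tk k ≤ lam := by
    intro k
    rw [htk]
    simp only
    exact div_le_self hlam.le (one_le_pow₀ (by norm_num))
  have hscale : ∀ j k, j ≤ k → tk j = 2 ^ (k - j) * tk k := by
    intro j k hjk
    have h2 : (2:ℝ) ^ k = 2 ^ (k - j) * 2 ^ j := by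
      rw [← pow_add]
      congr 1
      omega
    rw [htk]
    simp only
    rw [h2]
    field_simp
  -- the predicate for stopping
  set Spred : ℕ → (Fin (N + 1) → ℤ) → Prop := fun k z =>
    ENNReal.ofReal (cconst N * tk k ^ N) ≤ μH[(N : ℝ)] (frontier Ω ∩ cube (tk k) z) ∨
      ENNReal.ofReal ((1 - bconst N) * tk k ^ (N + 1)) ≤ volume (Ω ∩ cube (tk k) z)
    with hSpred
  -- the leaves
  set L : Set (ℕ × (Fin (N + 1) → ℤ)) := {q | Spred q.1 q.2 ∧
    ∀ j < q.1, ¬ Spred j (idx (tk j) (ptc (tk q.1) q.2))} with hL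
  -- leaves cover Ω
  have hcover : Ω ⊆ ⋃ q ∈ L, cube (tk q.1) q.2 := by
    intro x hx
    obtain ⟨ε, hε, hball⟩ := Metric.isOpen_iff.1 hΩ x hx
    have hexists : ∃ k, Spred k (idx (tk k) x) := by
      obtain ⟨k, hk⟩ := pow_unbounded_of_one_lt (Real.sqrt (N + 1) * lam / ε)
        (by norm_num : (1:ℝ) < 2)
      refine ⟨k, Or.inr ?_⟩
      have hsub : cube (tk k) (idx (tk k) x) ⊆ Ω := by
        intro y hy
        apply hball
        have hd : dist y x ≤ Real.sqrt (N + 1) * tk k :=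
          dist_le_of_mem_cube (htkpos k).le hy (mem_cube_idx (htkpos k) x)
        have : Real.sqrt (N + 1) * tk k < ε := by
          rw [htk]
          simp only
          rw [div_lt_iff₀ hε] at hk
          rw [← mul_div_assoc, div_lt_iff₀ (by positivity)]
          nlinarith [Real.sqrt_nonneg ((N:ℝ) + 1), hε]
        exact lt_of_le_of_lt hd this
      have heq : Ω ∩ cube (tk k) (idx (tk k) x) = cube (tk k) (idx (tk k) x) :=
        Set.inter_eq_self_of_subset_right hsub
      rw [heq, volume_cube, ← ENNReal.ofReal_pow (htkpos k).le]
      apply ENNReal.ofReal_le_ofReal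
      nlinarith [bconst_pos (N := N), pow_pos (htkpos k) (N + 1)]
    set k₀ := Nat.find hexists with hk₀
    set z₀ := idx (tk k₀) x with hz₀
    have hq : (k₀, z₀) ∈ L := by
      refine ⟨Nat.find_spec hexists, ?_⟩
      intro j hj
      have hxk : x ∈ cube (tk k₀) z₀ := mem_cube_idx (htkpos k₀) x
      have hxj : x ∈ cube (tk j) (idx (tk j) x) := mem_cube_idx (htkpos j) x
      have hnest : cube (tk k₀) z₀ ⊆ cube (tk j) (idx (tk j) x) := by
        have hform : tk j = 2 ^ (k₀ - j) * tk k₀ := hscale j k₀ hj.le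
        rw [hform] at hxj ⊢
        exact cube_subset_cube (htkpos k₀) hxk hxj
      have hptc : ptc (tk k₀) z₀ ∈ cube (tk j) (idx (tk j) x) :=
        hnest (ptc_mem (htkpos k₀) z₀)
      have hidx : idx (tk j) (ptc (tk k₀) z₀) = idx (tk j) x :=
        idx_eq_of_mem (htkpos j) hptc
      rw [hidx]
      exact Nat.find_min hexists hj
    exact Set.mem_biUnion hq (mem_cube_idx (htkpos k₀) x)
  -- leaves are pairwise disjoint
  have hdisjkey : ∀ q ∈ L, ∀ q' ∈ L, q.1 ≤ q'.1 → q ≠ q' →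
      Disjoint (cube (tk q.1) q.2) (cube (tk q'.1) q'.2) := by
    rintro ⟨k, z⟩ hq ⟨k', z'⟩ hq' hle hne
    rw [Set.disjoint_left]
    intro x hxq hxq'
    rcases Nat.lt_or_ge k k' with hlt | hge
    · -- strict: the small cube sits inside the big one
      have hform : tk k = 2 ^ (k' - k) * tk k' := hscale k k' hlt.le
      have hnest : cube (tk k') z' ⊆ cube (tk k) z := by
        rw [hform] at hxq ⊢
        exact cube_subset_cube (htkpos k') hxq' hxq
      have hptc : ptc (tk k') z' ∈ cube (tk k) z := hnest (ptc_mem (htkpos k') z')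
      have hidx : idx (tk k) (ptc (tk k') z') = z := idx_eq_of_mem (htkpos k) hptc
      have := hq'.2 k hlt
      rw [hidx] at this
      exact this hq.1
    · have hkk : k = k' := le_antisymm hle hge
      subst hkk
      have h1 : idx (tk k) x = z := idx_eq_of_mem (htkpos k) hxq
      have h2 : idx (tk k) x = z' := idx_eq_of_mem (htkpos k) hxq'
      exact hne (by rw [Prod.mk.injEq]; exact ⟨rfl, h1 ▸ h2 ▸ rfl⟩)
  have hdisj : L.PairwiseDisjoint (fun q => cube (tk q.1) q.2) := by
    intro q hq q' hq' hne
    rcases le_total q.1 q'.1 with h | h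
    · exact hdisjkey q hq q' hq' h hne
    · exact (hdisjkey q' hq' q hq h (Ne.symm hne)).symm
  -- per-leaf payment
  have hpay : ∀ q ∈ L,
      (EMetric.diam (cube (tk q.1) q.2) ^ (N + 1) +
        ENNReal.ofReal lam * EMetric.diam (cube (tk q.1) q.2) ^ N)
      ≤ ENNReal.ofReal (Cconst N) * (volume (Ω ∩ cube (tk q.1) q.2) +
          ENNReal.ofReal lam * μH[(N : ℝ)] (frontier Ω ∩ cube (tk q.1) q.2)) := by
    rintro ⟨k, z⟩ hq
    set t := tk k with htdef
    have htpos : 0 < t := htkpos k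
    set KN : ℝ := Real.sqrt (N + 1) ^ (N + 1) + Real.sqrt (N + 1) ^ N with hKN
    have hKNpos : 0 < KN := by
      have : (0:ℝ) < Real.sqrt (N + 1) := Real.sqrt_pos.2 (by positivity)
      rw [hKN]; positivity
    have hdiam := ediam_cube_le (N := N) htpos.le z
    -- gauge bound
    have hgauge : EMetric.diam (cube t z) ^ (N + 1) +
        ENNReal.ofReal lam * EMetric.diam (cube t z) ^ N
        ≤ ENNReal.ofReal lam * ENNReal.ofReal (KN * t ^ N) := by
      have h1 : EMetric.diam (cube t z) ^ (N + 1)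
          ≤ ENNReal.ofReal (Real.sqrt (N + 1) * t) ^ (N + 1) := pow_le_pow_left' hdiam _
      have h2 : EMetric.diam (cube t z) ^ N
          ≤ ENNReal.ofReal (Real.sqrt (N + 1) * t) ^ N := pow_le_pow_left' hdiam _
      have hsq : (0:ℝ) ≤ Real.sqrt (N + 1) * t := by positivity
      have he1 : ENNReal.ofReal (Real.sqrt (N + 1) * t) ^ (N + 1)
          ≤ ENNReal.ofReal lam * ENNReal.ofReal (Real.sqrt (N + 1) ^ (N + 1) * t ^ N) := by
        rw [← ENNReal.ofReal_pow hsq, ← ENNReal.ofReal_mul hlam.le]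
        apply ENNReal.ofReal_le_ofReal
        have : (Real.sqrt (N + 1) * t) ^ (N + 1)
            = (Real.sqrt (N + 1) ^ (N + 1) * t ^ N) * t := by ring
        rw [this]
        calc (Real.sqrt (N + 1) ^ (N + 1) * t ^ N) * t
            ≤ (Real.sqrt (N + 1) ^ (N + 1) * t ^ N) * lam := by
              apply mul_le_mul_of_nonneg_left (htklam k) (by positivity)
          _ = lam * (Real.sqrt (N + 1) ^ (N + 1) * t ^ N) := by ring
      have he2 : ENNReal.ofReal lam * ENNReal.ofReal (Real.sqrt (N + 1) * t) ^ N
          ≤ ENNReal.ofReal lam * ENNReal.ofReal (Real.sqrt (N + 1) ^ N * t ^ N) := by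
        apply mul_le_mul_right
        rw [← ENNReal.ofReal_pow hsq]
        apply ENNReal.ofReal_le_ofReal
        rw [mul_pow]
      calc EMetric.diam (cube t z) ^ (N + 1) +
            ENNReal.ofReal lam * EMetric.diam (cube t z) ^ N
          ≤ ENNReal.ofReal lam * ENNReal.ofReal (Real.sqrt (N + 1) ^ (N + 1) * t ^ N) +
            ENNReal.ofReal lam * ENNReal.ofReal (Real.sqrt (N + 1) ^ N * t ^ N) :=
            add_le_add (le_trans h1 he1) (le_trans (mul_le_mul_right h2 _) he2)
        _ = ENNReal.ofReal lam * ENNReal.ofReal (KN * t ^ N) := by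
            rw [← mul_add, ← ENNReal.ofReal_add (by positivity) (by positivity)]
            congr 2
            rw [hKN]
            ring
    rcases hq.1 with hrich | hbig
    · -- rich leaf: pay with the Hausdorff term
      have hc := cconst_pos (N := N)
      have hstep : ENNReal.ofReal (KN * t ^ N)
          ≤ ENNReal.ofReal (KN / cconst N) * μH[(N : ℝ)] (frontier Ω ∩ cube t z) := by
        have hid : KN * t ^ N = (KN / cconst N) * (cconst N * t ^ N) := by
          field_simp
        rw [hid, ENNReal.ofReal_mul (by positivity)]
        exact mul_le_mul_right hrich _
      have hfinal : ENNReal.ofReal lam * ENNReal.ofReal (KN * t ^ N)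
          ≤ ENNReal.ofReal (Cconst N) *
            (ENNReal.ofReal lam * μH[(N : ℝ)] (frontier Ω ∩ cube t z)) := by
        calc ENNReal.ofReal lam * ENNReal.ofReal (KN * t ^ N)
            ≤ ENNReal.ofReal lam * (ENNReal.ofReal (KN / cconst N) *
              μH[(N : ℝ)] (frontier Ω ∩ cube t z)) := mul_le_mul_right hstep _
          _ = ENNReal.ofReal (KN / cconst N) *
              (ENNReal.ofReal lam * μH[(N : ℝ)] (frontier Ω ∩ cube t z)) := by ring
          _ ≤ ENNReal.ofReal (Cconst N) *
              (ENNReal.ofReal lam * μH[(N : ℝ)] (frontier Ω ∩ cube t z)) := by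
              apply mul_le_mul_left
              apply ENNReal.ofReal_le_ofReal
              rw [Cconst, ← hKN, div_eq_mul_one_div]
              nlinarith [hKNpos, hc, one_div_pos.2 hc]
      calc EMetric.diam (cube t z) ^ (N + 1) +
            ENNReal.ofReal lam * EMetric.diam (cube t z) ^ N
          ≤ ENNReal.ofReal lam * ENNReal.ofReal (KN * t ^ N) := hgauge
        _ ≤ ENNReal.ofReal (Cconst N) *
            (ENNReal.ofReal lam * μH[(N : ℝ)] (frontier Ω ∩ cube t z)) := hfinal
        _ ≤ ENNReal.ofReal (Cconst N) * (volume (Ω ∩ cube t z) +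
            ENNReal.ofReal lam * μH[(N : ℝ)] (frontier Ω ∩ cube t z)) := by
            apply mul_le_mul_right
            exact le_add_self
    · -- big leaf: k must be 0, pay with the volume term
      have hb := bconst_pos (N := N)
      have hble := bconst_le (N := N)
      have hk0 : k = 0 := by
        by_contra hkne
        obtain ⟨j, rfl⟩ : ∃ j, k = j + 1 := ⟨k - 1, by omega⟩
        have hanc := hq.2 j (Nat.lt_succ_self j)
        set w := idx (tk j) (ptc (tk (j + 1)) z) with hw
        -- the parent cube contains the leaf cube
        have hptcmem : ptc (tk (j + 1)) z ∈ cube (tk (j + 1)) z :=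
          ptc_mem (htkpos (j + 1)) z
        have hptcj : ptc (tk (j + 1)) z ∈ cube (tk j) w := mem_cube_idx (htkpos j) _
        have hform : tk j = 2 ^ 1 * tk (j + 1) := by
          have := hscale j (j + 1) (Nat.le_succ j)
          simpa using this
        have hnest : cube (tk (j + 1)) z ⊆ cube (tk j) w := by
          rw [hform] at hptcj ⊢
          exact cube_subset_cube (htkpos (j + 1)) hptcmem hptcj
        have hanc' : ¬ (ENNReal.ofReal (cconst N * tk j ^ N) ≤
            μH[(N : ℝ)] (frontier Ω ∩ cube (tk j) w) ∨
            ENNReal.ofReal ((1 - bconst N) * tk j ^ (N + 1)) ≤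
              volume (Ω ∩ cube (tk j) w)) := hanc
        push_neg at hanc'
        obtain ⟨hpoor, hnotbig⟩ := hanc'
        have hdich := dichotomy hΩ (htkpos j) w hpoor
        have hsmall : volume (Ω ∩ cube (tk j) w)
            ≤ ENNReal.ofReal (bconst N * tk j ^ (N + 1)) := by
          rcases hdich with h | h
          · exact h
          · exact absurd h (not_le_of_gt hnotbig)
        have hmono : volume (Ω ∩ cube (tk (j + 1)) z) ≤ volume (Ω ∩ cube (tk j) w) :=
          measure_mono (Set.inter_subset_inter_right _ hnest)
        have hchain : ENNReal.ofReal ((1 - bconst N) * tk (j + 1) ^ (N + 1))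
            ≤ ENNReal.ofReal (bconst N * tk j ^ (N + 1)) :=
          le_trans hbig (le_trans hmono hsmall)
        rw [ENNReal.ofReal_le_ofReal_iff (by positivity)] at hchain
        -- numeric contradiction
        have htj : tk j = 2 * tk (j + 1) := by rw [hform]; ring
        rw [htj] at hchain
        have hpow : (2 * tk (j + 1)) ^ (N + 1) = 2 ^ (N + 1) * tk (j + 1) ^ (N + 1) := by
          rw [mul_pow]
        rw [hpow] at hchain
        have hbval : bconst N * 2 ^ (N + 1) = 1 / 4 := by
          rw [bconst]
          have hpow2 : (2:ℝ) ^ (N + 3) = 2 ^ (N + 1) * 4 := by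
            rw [show N + 3 = (N + 1) + 2 by omega, pow_add]
            norm_num
          rw [hpow2]
          have h2ne : (2:ℝ) ^ (N + 1) ≠ 0 := by positivity
          field_simp
        have htp : (0:ℝ) < tk (j + 1) ^ (N + 1) := pow_pos (htkpos (j + 1)) _
        nlinarith [hchain, htp, hbval, hble]
      subst hk0
      have htlam : t = lam := by rw [htdef, htk]; simp
      have hquarter : ENNReal.ofReal (KN * t ^ N)
          ≤ ENNReal.ofReal (2 * KN / lam) * volume (Ω ∩ cube t z) := by
        have h1b : (0:ℝ) < 1 - bconst N := by nlinarith
        have hid : KN * t ^ N = (2 * KN / lam) * ((1 - bconst N) * t ^ (N + 1)) *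
            (1 / (2 * (1 - bconst N))) := by
          rw [htlam]
          field_simp
          ring
        calc ENNReal.ofReal (KN * t ^ N)
            = ENNReal.ofReal ((2 * KN / lam) * ((1 - bconst N) * t ^ (N + 1)) *
                (1 / (2 * (1 - bconst N)))) := by rw [← hid]
          _ ≤ ENNReal.ofReal ((2 * KN / lam) * ((1 - bconst N) * t ^ (N + 1))) := by
              apply ENNReal.ofReal_le_ofReal
              have hle1 : 1 / (2 * (1 - bconst N)) ≤ 1 := by
                rw [div_le_one (by positivity)]
                nlinarith
              have hA : (0:ℝ) ≤ 2 * KN / lam * ((1 - bconst N) * t ^ (N + 1)) :=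
                mul_nonneg (by positivity) (mul_nonneg h1b.le (by positivity))
              exact mul_le_of_le_one_right hA hle1
          _ = ENNReal.ofReal (2 * KN / lam) *
              ENNReal.ofReal ((1 - bconst N) * t ^ (N + 1)) := by
              rw [ENNReal.ofReal_mul (by positivity)]
          _ ≤ ENNReal.ofReal (2 * KN / lam) * volume (Ω ∩ cube t z) :=
              mul_le_mul_right hbig _
      have hfinal : ENNReal.ofReal lam * ENNReal.ofReal (KN * t ^ N)
          ≤ ENNReal.ofReal (Cconst N) * volume (Ω ∩ cube t z) := by
        calc ENNReal.ofReal lam * ENNReal.ofReal (KN * t ^ N)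
            ≤ ENNReal.ofReal lam * (ENNReal.ofReal (2 * KN / lam) *
              volume (Ω ∩ cube t z)) := mul_le_mul_right hquarter _
          _ = (ENNReal.ofReal lam * ENNReal.ofReal (2 * KN / lam)) *
              volume (Ω ∩ cube t z) := by ring
          _ = ENNReal.ofReal (2 * KN) * volume (Ω ∩ cube t z) := by
              rw [← ENNReal.ofReal_mul hlam.le]
              congr 2
              field_simp
          _ ≤ ENNReal.ofReal (Cconst N) * volume (Ω ∩ cube t z) := by
              apply mul_le_mul_left
              apply ENNReal.ofReal_le_ofReal
              rw [Cconst, ← hKN]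
              have hc := cconst_pos (N := N)
              nlinarith [hKNpos, one_div_pos.2 hc]
      calc EMetric.diam (cube t z) ^ (N + 1) +
            ENNReal.ofReal lam * EMetric.diam (cube t z) ^ N
          ≤ ENNReal.ofReal lam * ENNReal.ofReal (KN * t ^ N) := hgauge
        _ ≤ ENNReal.ofReal (Cconst N) * volume (Ω ∩ cube t z) := hfinal
        _ ≤ ENNReal.ofReal (Cconst N) * (volume (Ω ∩ cube t z) +
            ENNReal.ofReal lam * μH[(N : ℝ)] (frontier Ω ∩ cube t z)) := by
            apply mul_le_mul_right
            exact self_le_add_right _ _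
  -- assemble
  haveI : Countable ↥L := Set.to_countable L |>.to_subtype
  set m : Set (E N) → ℝ≥0∞ := fun s => EMetric.diam s ^ (N + 1) +
    ENNReal.ofReal lam * EMetric.diam s ^ N with hm
  calc OuterMeasure.boundedBy m Ω
      ≤ OuterMeasure.boundedBy m (⋃ q ∈ L, cube (tk q.1) q.2) := measure_mono hcover
    _ ≤ ∑' q : ↥L, OuterMeasure.boundedBy m (cube (tk q.1.1) q.1.2) := by
        rw [Set.biUnion_eq_iUnion]
        exact measure_iUnion_le _
    _ ≤ ∑' q : ↥L, m (cube (tk q.1.1) q.1.2) :=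
        ENNReal.tsum_le_tsum fun q => OuterMeasure.boundedBy_le _
    _ ≤ ∑' q : ↥L, ENNReal.ofReal (Cconst N) * (volume (Ω ∩ cube (tk q.1.1) q.1.2) +
          ENNReal.ofReal lam * μH[(N : ℝ)] (frontier Ω ∩ cube (tk q.1.1) q.1.2)) :=
        ENNReal.tsum_le_tsum fun q => hpay q.1 q.2
    _ = ENNReal.ofReal (Cconst N) * ((∑' q : ↥L, volume (Ω ∩ cube (tk q.1.1) q.1.2)) +
          ENNReal.ofReal lam *
            (∑' q : ↥L, μH[(N : ℝ)] (frontier Ω ∩ cube (tk q.1.1) q.1.2))) := by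
        rw [ENNReal.tsum_mul_left]
        congr 1
        rw [ENNReal.tsum_add]
        congr 1
        rw [ENNReal.tsum_mul_left]
    _ ≤ ENNReal.ofReal (Cconst N) *
        (volume Ω + ENNReal.ofReal lam * μH[(N : ℝ)] (frontier Ω)) := by
        apply mul_le_mul_right
        apply add_le_add
        · apply tsum_subtype_measure_biUnion_le volume _
            (hdisj.mono_on fun q hq => Set.inter_subset_right)
            (fun q hq => hΩ.measurableSet.inter (cube_measurable _ _))
            (fun q hq => Set.inter_subset_left)
        · apply mul_le_mul_right
          apply tsum_subtype_measure_biUnion_le _ _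
            (hdisj.mono_on fun q hq => Set.inter_subset_right)
            (fun q hq => isClosed_frontier.measurableSet.inter (cube_measurable _ _))
            (fun q hq => Set.inter_subset_left)

end

end MixedGaugeProof


/-- **Upper comparability on Lipschitz domains.** For `n ≥ 2`, `L > 0`,
`N ∈ ℕ` there is `C > 0` depending only on `n, L, N` such that for every bounded open
`Ω ⊆ ℝ^n` with Lipschitz boundary of character `(L, N)` and every real `λ > 0`,
`μ_λ(Ω) ≤ C (vol(Ω) + λ 𝓗^{n-1}(∂Ω))`. -/
theorem mixedGauge_le_on_lipschitz_domains (n : ℕ) (hn : 2 ≤ n) (L : ℝ≥0) (hL : 0 < L)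
    (N : ℕ) :
    ∃ C : ℝ, 0 < C ∧
      ∀ Ω : Set (EuclideanSpace ℝ (Fin n)), IsOpen Ω → Bornology.IsBounded Ω →
        HasLipschitzBoundaryChar n L N Ω →
        ∀ lam : ℝ, 0 < lam →
          mixedGauge n (ENNReal.ofReal lam) Ω ≤
            ENNReal.ofReal C *
              (volume Ω + ENNReal.ofReal lam * μH[(n - 1 : ℕ)] (frontier Ω)) := by
  obtain ⟨M, rfl⟩ : ∃ M, n = M + 1 := ⟨n - 1, by omega⟩
  refine ⟨MixedGaugeProof.Cconst M, MixedGaugeProof.Cconst_pos, ?_⟩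
  intro Ω hΩ hbd hchar lam hlam
  have h := MixedGaugeProof.main_bound (N := M) hΩ hlam
  have hgoal : mixedGauge (M + 1) (ENNReal.ofReal lam) Ω =
      OuterMeasure.boundedBy (fun s : Set (MixedGaugeProof.E M) =>
        EMetric.diam s ^ (M + 1) + ENNReal.ofReal lam * EMetric.diam s ^ M) Ω := by
    simp [mixedGauge, Nat.add_sub_cancel]
  rw [hgoal]
  have hidx : ((M + 1 - 1 : ℕ) : ℝ) = (M : ℝ) := by norm_num
  rw [show (M + 1 - 1 : ℕ) = M by omega]
  exact h
end

section
/- Lower comparability on Lipschitz domains (Theorem 4.2): let n ≥ 2, L > 0, and N ∈ ℕ. There exists a constant c > 0, depending only on n, L and N, such that for every bounded open set Ω ⊆ ℝ^n with Lipschitz boundary of character (L, N) and every real λ > 0, μ_λ(Ω) ≥ c · ( vol(Ω) + λ · 𝓗^{n-1}(∂Ω) ), where vol is Lebesgue measure, ∂Ω = frontier Ω, and 𝓗^{n-1} is the (n−1)-dimensional Hausdorff measure. -/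
open MeasureTheory Metric Set
open scoped ENNReal NNReal

lemma aux_vol_le_diam_pow (k : ℕ) (hk : 1 ≤ k) (s : Set (EuclideanSpace ℝ (Fin k))) :
    volume s ≤ volume (closedBall (0 : EuclideanSpace ℝ (Fin k)) 1) * EMetric.diam s ^ k := by
  rcases s.eq_empty_or_nonempty with rfl | ⟨x, hx⟩
  · simp
  have hvol : volume (closedBall (0 : EuclideanSpace ℝ (Fin k)) 1) ≠ 0 :=
    (measure_closedBall_pos volume _ one_pos).ne'
  rcases eq_or_ne (EMetric.diam s) ⊤ with hd | hd
  · rw [hd, ENNReal.top_pow (by omega), ENNReal.mul_top hvol]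
    exact le_top
  · have hb : Bornology.IsBounded s := Metric.isBounded_iff_ediam_ne_top.2 hd
    have hsub : s ⊆ closedBall x (Metric.diam s) := fun a ha =>
      mem_closedBall.2 (Metric.dist_le_diam_of_mem hb ha hx)
    calc volume s ≤ volume (closedBall x (Metric.diam s)) := measure_mono hsub
      _ = ENNReal.ofReal (Metric.diam s ^ k) *
            volume (closedBall (0 : EuclideanSpace ℝ (Fin k)) 1) := by
          rw [Measure.addHaar_closedBall' volume x Metric.diam_nonneg,
            finrank_euclideanSpace_fin]
      _ = volume (closedBall (0 : EuclideanSpace ℝ (Fin k)) 1) * EMetric.diam s ^ k := by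
          rw [ENNReal.ofReal_pow Metric.diam_nonneg, Metric.diam, ENNReal.ofReal_toReal (a := Metric.ediam s) hd,
            mul_comm]
          rfl

lemma aux_hausdorff_le_diam_pow (m : ℕ) (hm : 1 ≤ m) :
    ∃ C : ℝ≥0∞, C ≠ 0 ∧ C ≠ ⊤ ∧
      ∀ s : Set (EuclideanSpace ℝ (Fin m)), μH[(m : ℕ)] s ≤ C * EMetric.diam s ^ m := by
  set K : ℝ≥0 := (m : ℝ≥0) ^ (2⁻¹ : ℝ) with hKdef
  have hK0 : (0 : ℝ≥0) < K := NNReal.rpow_pos (by positivity)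
  have hKE0 : (0 : ℝ≥0∞) < (K : ℝ≥0∞) ^ ((m : ℕ) : ℝ) :=
    ENNReal.rpow_pos (by exact_mod_cast hK0) ENNReal.coe_ne_top
  have hKEtop : (K : ℝ≥0∞) ^ ((m : ℕ) : ℝ) ≠ ⊤ :=
    ENNReal.rpow_ne_top_of_nonneg (by positivity) ENNReal.coe_ne_top
  refine ⟨(K : ℝ≥0∞) ^ ((m : ℕ) : ℝ) * 2 ^ m, ?_, ?_, ?_⟩
  · exact mul_ne_zero hKE0.ne' (by positivity)
  · exact ENNReal.mul_ne_top hKEtop (ENNReal.pow_ne_top (by norm_num))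
  intro s
  rcases s.eq_empty_or_nonempty with rfl | ⟨x, hx⟩
  · simp
  rcases eq_or_ne (EMetric.diam s) ⊤ with hd | hd
  · rw [hd, ENNReal.top_pow (by omega), ENNReal.mul_top
      (mul_ne_zero hKE0.ne' (by positivity))]
    exact le_top
  have hb : Bornology.IsBounded s := Metric.isBounded_iff_ediam_ne_top.2 hd
  set r := Metric.diam s with hrdef
  have hr : 0 ≤ r := Metric.diam_nonneg
  have hsub : s ⊆ closedBall x r := fun a ha =>
    mem_closedBall.2 (Metric.dist_le_diam_of_mem hb ha hx)
  set φ := WithLp.equiv 2 (Fin m → ℝ) with hφdef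
  have hφ : LipschitzWith 1 φ := PiLp.lipschitzWith_ofLp 2 _
  have hψ : LipschitzWith K φ.symm := by
    intro a b
    simpa [hKdef, hφdef] using
      (PiLp.antilipschitzWith_ofLp 2 (fun _ : Fin m => ℝ)) (φ.symm a) (φ.symm b)
  have himg : s ⊆ φ.symm '' closedBall (φ x) r := by
    intro a ha
    refine ⟨φ a, ?_, Equiv.symm_apply_apply _ _⟩
    have := hφ.dist_le_mul a x
    rw [NNReal.coe_one, one_mul] at this
    exact mem_closedBall.2 (this.trans (mem_closedBall.1 (hsub ha)))
  calc μH[(m : ℕ)] s ≤ μH[(m : ℕ)] (φ.symm '' closedBall (φ x) r) := measure_mono himg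
    _ ≤ (K : ℝ≥0∞) ^ ((m : ℕ) : ℝ) * μH[(m : ℕ)] (closedBall (φ x) r) :=
        hψ.hausdorffMeasure_image_le (by positivity) _
    _ = (K : ℝ≥0∞) ^ ((m : ℕ) : ℝ) * ENNReal.ofReal ((2 * r) ^ m) := by
        congr 1
        have h1 : (μH[(m : ℕ)] : Measure (Fin m → ℝ)) = volume := by
          rw [show ((m : ℕ) : ℝ) = ((Fintype.card (Fin m) : ℕ) : ℝ) by simp]
          exact hausdorffMeasure_pi_real
        rw [h1]
        simpa using Real.volume_pi_closedBall (φ x) hr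
    _ ≤ (K : ℝ≥0∞) ^ ((m : ℕ) : ℝ) * 2 ^ m * EMetric.diam s ^ m := by
        rw [mul_assoc]
        gcongr
        rw [ENNReal.ofReal_pow (by positivity), ENNReal.ofReal_mul (by norm_num), mul_pow,
          hrdef, Metric.diam, ENNReal.ofReal_toReal (a := Metric.ediam s) hd, ENNReal.ofReal_ofNat]
        exact le_rfl

/-- **Lower comparability on Lipschitz domains.** For `n ≥ 2`, `L > 0`,
`N ∈ ℕ` there is `c > 0` depending only on `n, L, N` such that for every bounded open
`Ω ⊆ ℝ^n` with Lipschitz boundary of character `(L, N)` and every real `λ > 0`,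
`μ_λ(Ω) ≥ c (vol(Ω) + λ 𝓗^{n-1}(∂Ω))`. -/
theorem mixedGauge_ge_on_lipschitz_domains (n : ℕ) (hn : 2 ≤ n) (L : ℝ≥0) (hL : 0 < L)
    (N : ℕ) :
    ∃ c : ℝ, 0 < c ∧
      ∀ Ω : Set (EuclideanSpace ℝ (Fin n)), IsOpen Ω → Bornology.IsBounded Ω →
        HasLipschitzBoundaryChar n L N Ω →
        ∀ lam : ℝ, 0 < lam →
          ENNReal.ofReal c *
              (volume Ω + ENNReal.ofReal lam * μH[(n - 1 : ℕ)] (frontier Ω)) ≤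
            mixedGauge n (ENNReal.ofReal lam) Ω := by
  classical
  obtain ⟨CB, hCB0, hCBtop, hB⟩ := aux_hausdorff_le_diam_pow (n - 1) (by omega)
  set Kvol : ℝ≥0∞ := volume (closedBall (0 : EuclideanSpace ℝ (Fin n)) 1) with hKvol
  set Keq : ℝ≥0 := (2 : ℝ≥0) ^ (2⁻¹ : ℝ) with hKeq
  set KΓ : ℝ≥0 := Keq * max 1 L with hKΓ
  set D : ℝ≥0∞ := max 1 ((KΓ : ℝ≥0∞) ^ (((n - 1 : ℕ)) : ℝ)) with hD
  set C : ℝ≥0∞ := Kvol + N * CB + 1 with hC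
  have hD1 : (1 : ℝ≥0∞) ≤ D := le_max_left _ _
  have hD0 : D ≠ 0 := (zero_lt_one.trans_le hD1).ne'
  have hDtop : D ≠ ⊤ := by
    have h1 : (KΓ : ℝ≥0∞) ^ (((n - 1 : ℕ)) : ℝ) < ⊤ :=
      ENNReal.rpow_lt_top_of_nonneg (by positivity) ENNReal.coe_ne_top
    exact (max_lt ENNReal.one_lt_top h1).ne
  have hCtop : C ≠ ⊤ := by
    refine ENNReal.add_ne_top.2 ⟨ENNReal.add_ne_top.2 ⟨?_, ?_⟩, ENNReal.one_ne_top⟩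
    · exact measure_closedBall_lt_top.ne
    · exact ENNReal.mul_ne_top (ENNReal.natCast_ne_top N) hCBtop
  have hC0 : C ≠ 0 := by
    simp [hC]
  set Ct : ℝ≥0∞ := D * C with hCt
  have hCt0 : Ct ≠ 0 := mul_ne_zero hD0 hC0
  have hCttop : Ct ≠ ⊤ := ENNReal.mul_ne_top hDtop hCtop
  have hctr : 0 < Ct.toReal := ENNReal.toReal_pos hCt0 hCttop
  refine ⟨Ct.toReal⁻¹, inv_pos.2 hctr, ?_⟩
  intro Ω hΩo hΩb hchar lam hlam
  obtain ⟨e, W, g, f, hWo, hcov, hlip, hgr⟩ := hchar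
  set lam' : ℝ≥0∞ := ENNReal.ofReal lam with hlam'
  set q : EuclideanSpace ℝ (Fin n) → EuclideanSpace ℝ (Fin (n - 1)) × ℝ :=
    fun z => WithLp.equiv 2 (EuclideanSpace ℝ (Fin (n - 1)) × ℝ) (e z) with hq
  set T : Fin N → EuclideanSpace ℝ (Fin n) → EuclideanSpace ℝ (Fin (n - 1)) :=
    fun j z => (q (g j z)).1 with hTdef
  set Γ : Fin N → EuclideanSpace ℝ (Fin (n - 1)) → EuclideanSpace ℝ (Fin n) :=
    fun j p => (g j).symm
      (e.symm ((WithLp.equiv 2 (EuclideanSpace ℝ (Fin (n - 1)) × ℝ)).symm (p, f j p))) with hΓdef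
  have hψP : LipschitzWith Keq
      (WithLp.equiv 2 (EuclideanSpace ℝ (Fin (n - 1)) × ℝ)).symm := by
    intro a b
    simpa [hKeq] using
      (WithLp.prod_antilipschitzWith_ofLp 2 (EuclideanSpace ℝ (Fin (n - 1))) ℝ)
        ((WithLp.equiv 2 (EuclideanSpace ℝ (Fin (n - 1)) × ℝ)).symm a)
        ((WithLp.equiv 2 (EuclideanSpace ℝ (Fin (n - 1)) × ℝ)).symm b)
  -- Lipschitz properties
  have hTlip : ∀ j, LipschitzWith 1 (T j) := by
    intro j
    have h := (LipschitzWith.prod_fst.comp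
      ((WithLp.prod_lipschitzWith_ofLp 2 (EuclideanSpace ℝ (Fin (n - 1))) ℝ).comp
        (e.isometry.lipschitz.comp (g j).isometry.lipschitz)))
    simpa [hTdef, hq, Function.comp_def] using h
  have hΓlip : ∀ j, LipschitzWith KΓ (Γ j) := by
    intro j
    have hpair : LipschitzWith (max 1 L) (fun p : EuclideanSpace ℝ (Fin (n - 1)) => (p, f j p)) :=
      LipschitzWith.prodMk LipschitzWith.id (hlip j)
    have h := ((g j).symm.isometry.lipschitz.comp
      (e.symm.isometry.lipschitz.comp (hψP.comp hpair)))
    simpa [hΓdef, hKΓ, Function.comp_def] using h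
  -- key geometric inclusion
  have hkey : ∀ j, frontier Ω ∩ W j ⊆ Γ j '' (T j '' Ω) := by
    intro j x hx
    obtain ⟨hxf, hxW⟩ := hx
    set u := g j x with hu
    have hA : IsOpen (g j '' Ω) := (g j).toHomeomorph.isOpenMap _ hΩo
    have hV : IsOpen (g j '' W j) := (g j).toHomeomorph.isOpenMap _ (hWo j)
    have huV : u ∈ g j '' W j := ⟨x, hxW, rfl⟩
    have huF : u ∈ frontier (g j '' Ω) := by
      have h := (g j).toHomeomorph.image_frontier Ω
      have hcoe : ⇑(g j).toHomeomorph = ⇑(g j) := rfl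
      rw [hcoe] at h
      rw [← h]
      exact ⟨x, hxf, rfl⟩
    rw [hA.frontier_eq] at huF
    have hcq : Continuous q :=
      ((WithLp.prod_lipschitzWith_ofLp 2 (EuclideanSpace ℝ (Fin (n - 1))) ℝ).continuous).comp
        e.continuous
    have hc2 : Continuous fun z => (q z).2 := hcq.snd
    have hc1 : Continuous fun z => f j (q z).1 := (hlip j).continuous.comp hcq.fst
    have hnlt : ¬ (q u).2 < f j (q u).1 := by
      intro hlt
      have hmem : u ∈ (g j '' Ω) ∩ (g j '' W j) := by
        rw [hgr j]; exact ⟨hlt, huV⟩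
      exact huF.2 hmem.1
    have hle : (q u).2 ≤ f j (q u).1 := by
      have hucl : u ∈ closure {z | (q z).2 < f j (q z).1} := by
        rw [_root_.mem_closure_iff]
        intro O hO hOu
        have h1 := huF.1
        rw [_root_.mem_closure_iff] at h1
        obtain ⟨z, hz, hzA⟩ := h1 (O ∩ g j '' W j) (hO.inter hV) ⟨hOu, huV⟩
        have hzS : z ∈ {w | (q w).2 < f j (q w).1} ∩ (g j '' W j) := by
          rw [← hgr j]; exact ⟨hzA, hz.2⟩
        exact ⟨z, hz.1, hzS.1⟩
      exact closure_minimal (fun z (hz : (q z).2 < f j (q z).1) => le_of_lt hz)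
        (isClosed_le hc2 hc1) hucl
    have heq : (q u).2 = f j (q u).1 := le_antisymm hle (not_lt.1 hnlt)
    set F : ℝ → EuclideanSpace ℝ (Fin n) := fun δ =>
      e.symm ((WithLp.equiv 2 (EuclideanSpace ℝ (Fin (n - 1)) × ℝ)).symm
        ((q u).1, (q u).2 - δ)) with hF
    have hF0 : F 0 = u := by
      simp only [hF, sub_zero, hq, Prod.mk.eta, Equiv.symm_apply_apply,
        LinearIsometryEquiv.symm_apply_apply]
    have hFc : Continuous F := by
      refine e.symm.continuous.comp (Continuous.comp hψP.continuous ?_)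
      exact continuous_const.prodMk (continuous_const.sub continuous_id)
    have h0V : F 0 ∈ g j '' W j := by rw [hF0]; exact huV
    have hnh : F ⁻¹' (g j '' W j) ∈ nhds (0 : ℝ) := (hV.preimage hFc).mem_nhds h0V
    obtain ⟨ε, hε, hball⟩ := Metric.mem_nhds_iff.1 hnh
    set δ := ε / 2 with hδ
    have hδpos : 0 < δ := by positivity
    have hFδV : F δ ∈ g j '' W j := by
      apply hball
      simp only [mem_ball, Real.dist_eq, sub_zero, hδ]
      rw [abs_of_pos (by positivity)]
      linarith
    have hqFδ : q (F δ) = ((q u).1, (q u).2 - δ) := by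
      simp only [hq, hF, LinearIsometryEquiv.apply_symm_apply, Equiv.apply_symm_apply]
    have hFδS : (q (F δ)).2 < f j (q (F δ)).1 := by
      rw [hqFδ]
      simp only
      rw [← heq]
      linarith
    have hFδA : F δ ∈ g j '' Ω := by
      have hmem : F δ ∈ {w | (q w).2 < f j (q w).1} ∩ (g j '' W j) := ⟨hFδS, hFδV⟩
      rw [← hgr j] at hmem
      exact hmem.1
    obtain ⟨z, hzΩ, hgz⟩ := hFδA
    refine ⟨(q u).1, ⟨z, hzΩ, ?_⟩, ?_⟩
    · show (q (g j z)).1 = (q u).1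
      rw [hgz, hqFδ]
    · show (g j).symm
        (e.symm ((WithLp.equiv 2 (EuclideanSpace ℝ (Fin (n - 1)) × ℝ)).symm
          ((q u).1, f j (q u).1))) = x
      rw [← heq]
      simp only [hq, Prod.mk.eta, Equiv.symm_apply_apply,
        LinearIsometryEquiv.symm_apply_apply, hu, IsometryEquiv.symm_apply_apply]
  -- bound on Hausdorff measure of images
  have hμHT : ∀ j (s : Set (EuclideanSpace ℝ (Fin n))),
      μH[(n - 1 : ℕ)] (T j '' s) ≤ CB * EMetric.diam s ^ (n - 1) := by
    intro j s
    refine (hB _).trans ?_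
    gcongr
    simpa [EMetric.diam] using (hTlip j).ediam_image_le s
  -- comparison with boundary measure
  have hX1X2 : volume Ω + lam' * μH[(n - 1 : ℕ)] (frontier Ω) ≤
      D * (volume Ω + lam' * ∑ j : Fin N, μH[(n - 1 : ℕ)] (T j '' Ω)) := by
    have hfr : μH[(n - 1 : ℕ)] (frontier Ω) ≤
        ((KΓ : ℝ≥0∞) ^ (((n - 1 : ℕ)) : ℝ)) * ∑ j : Fin N, μH[(n - 1 : ℕ)] (T j '' Ω) := by
      have hsub : frontier Ω ⊆ ⋃ j : Fin N, (frontier Ω ∩ W j) := by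
        intro x hxf
        obtain ⟨j, hxj⟩ := mem_iUnion.1 (hcov hxf)
        exact mem_iUnion.2 ⟨j, hxf, hxj⟩
      calc μH[(n - 1 : ℕ)] (frontier Ω) ≤ ∑' j : Fin N, μH[(n - 1 : ℕ)] (frontier Ω ∩ W j) :=
            (measure_mono hsub).trans (measure_iUnion_le _)
        _ = ∑ j : Fin N, μH[(n - 1 : ℕ)] (frontier Ω ∩ W j) := tsum_fintype _
        _ ≤ ∑ j : Fin N, ((KΓ : ℝ≥0∞) ^ (((n - 1 : ℕ)) : ℝ)) * μH[(n - 1 : ℕ)] (T j '' Ω) :=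
            Finset.sum_le_sum fun j _ => (measure_mono (hkey j)).trans
              ((hΓlip j).hausdorffMeasure_image_le (by positivity) _)
        _ = _ := (Finset.mul_sum _ _ _).symm
    have hD2 : ((KΓ : ℝ≥0∞) ^ (((n - 1 : ℕ)) : ℝ)) ≤ D := le_max_right _ _
    calc volume Ω + lam' * μH[(n - 1 : ℕ)] (frontier Ω)
        ≤ volume Ω + lam' * (((KΓ : ℝ≥0∞) ^ (((n - 1 : ℕ)) : ℝ)) *
            ∑ j : Fin N, μH[(n - 1 : ℕ)] (T j '' Ω)) :=
          add_le_add_right (mul_le_mul_right hfr _) _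
      _ ≤ D * volume Ω + D * (lam' * ∑ j : Fin N, μH[(n - 1 : ℕ)] (T j '' Ω)) := by
          refine add_le_add ?_ ?_
          · exact le_mul_of_one_le_left zero_le hD1
          · rw [mul_left_comm]
            exact mul_le_mul_left hD2 _
      _ = D * (volume Ω + lam' * ∑ j : Fin N, μH[(n - 1 : ℕ)] (T j '' Ω)) :=
          (mul_add _ _ _).symm
  -- comparison with covers
  have hX2R : ∀ t : ℕ → Set (EuclideanSpace ℝ (Fin n)), Ω ⊆ iUnion t →
      volume Ω + lam' * ∑ j : Fin N, μH[(n - 1 : ℕ)] (T j '' Ω) ≤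
        C * ∑' i, ⨆ _ : (t i).Nonempty,
          (EMetric.diam (t i) ^ n + lam' * EMetric.diam (t i) ^ (n - 1)) := by
    intro t ht
    have hterm : ∀ i, volume (t i) + lam' * ∑ j : Fin N, μH[(n - 1 : ℕ)] (T j '' t i) ≤
        C * ⨆ _ : (t i).Nonempty,
          (EMetric.diam (t i) ^ n + lam' * EMetric.diam (t i) ^ (n - 1)) := by
      intro i
      rcases (t i).eq_empty_or_nonempty with hti | hti
      · simp [hti]
      rw [iSup_pos hti]
      have h1 : volume (t i) ≤ Kvol * EMetric.diam (t i) ^ n :=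
        aux_vol_le_diam_pow n (by omega) _
      have h2 : ∑ j : Fin N, μH[(n - 1 : ℕ)] (T j '' t i) ≤
          (N : ℝ≥0∞) * (CB * EMetric.diam (t i) ^ (n - 1)) := by
        calc ∑ j : Fin N, μH[(n - 1 : ℕ)] (T j '' t i)
            ≤ ∑ _j : Fin N, CB * EMetric.diam (t i) ^ (n - 1) :=
              Finset.sum_le_sum fun j _ => hμHT j (t i)
          _ = (N : ℝ≥0∞) * (CB * EMetric.diam (t i) ^ (n - 1)) := by
              simp [Finset.sum_const, nsmul_eq_mul]
      have hKC : Kvol ≤ C := by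
        rw [hC]; exact le_add_right le_self_add
      have hNC : (N : ℝ≥0∞) * CB ≤ C := by
        rw [hC]; exact le_add_right le_add_self
      calc volume (t i) + lam' * ∑ j : Fin N, μH[(n - 1 : ℕ)] (T j '' t i)
          ≤ Kvol * EMetric.diam (t i) ^ n +
              ((N : ℝ≥0∞) * CB) * (lam' * EMetric.diam (t i) ^ (n - 1)) := by
            refine add_le_add h1 ?_
            calc lam' * ∑ j : Fin N, μH[(n - 1 : ℕ)] (T j '' t i)
                ≤ lam' * ((N : ℝ≥0∞) * (CB * EMetric.diam (t i) ^ (n - 1))) :=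
                  mul_le_mul_right h2 _
              _ = ((N : ℝ≥0∞) * CB) * (lam' * EMetric.diam (t i) ^ (n - 1)) := by ring
        _ ≤ C * (EMetric.diam (t i) ^ n) + C * (lam' * EMetric.diam (t i) ^ (n - 1)) :=
            add_le_add (mul_le_mul_left hKC _) (mul_le_mul_left hNC _)
        _ = C * (EMetric.diam (t i) ^ n + lam' * EMetric.diam (t i) ^ (n - 1)) :=
            (mul_add _ _ _).symm
    have hv : volume Ω ≤ ∑' i, volume (t i) := (measure_mono ht).trans (measure_iUnion_le t)
    have hHj : ∀ j, μH[(n - 1 : ℕ)] (T j '' Ω) ≤ ∑' i, μH[(n - 1 : ℕ)] (T j '' t i) := by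
      intro j
      have himg : T j '' Ω ⊆ ⋃ i, T j '' t i := by
        rw [← image_iUnion]
        exact image_mono ht
      exact (measure_mono himg).trans (measure_iUnion_le _)
    calc volume Ω + lam' * ∑ j : Fin N, μH[(n - 1 : ℕ)] (T j '' Ω)
        ≤ (∑' i, volume (t i)) +
            lam' * ∑ j : Fin N, ∑' i, μH[(n - 1 : ℕ)] (T j '' t i) :=
          add_le_add hv (mul_le_mul_right (Finset.sum_le_sum fun j _ => hHj j) _)
      _ = (∑' i, volume (t i)) +
            lam' * ∑' i, ∑ j : Fin N, μH[(n - 1 : ℕ)] (T j '' t i) := by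
          rw [Summable.tsum_finsetSum fun j _ => ENNReal.summable]
      _ = ∑' i, (volume (t i) + lam' * ∑ j : Fin N, μH[(n - 1 : ℕ)] (T j '' t i)) := by
          rw [← ENNReal.tsum_mul_left, ← ENNReal.tsum_add]
      _ ≤ ∑' i, C * ⨆ _ : (t i).Nonempty,
            (EMetric.diam (t i) ^ n + lam' * EMetric.diam (t i) ^ (n - 1)) :=
          ENNReal.tsum_le_tsum hterm
      _ = C * ∑' i, ⨆ _ : (t i).Nonempty,
            (EMetric.diam (t i) ^ n + lam' * EMetric.diam (t i) ^ (n - 1)) :=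
          ENNReal.tsum_mul_left
  -- conclusion
  have hof : ENNReal.ofReal (Ct.toReal⁻¹) = Ct⁻¹ := by
    rw [ENNReal.ofReal_inv_of_pos hctr, ENNReal.ofReal_toReal hCttop]
  rw [hof]
  have hmg : mixedGauge n lam' Ω =
      ⨅ (t : ℕ → Set (EuclideanSpace ℝ (Fin n))) (_ : Ω ⊆ iUnion t),
        ∑' i, ⨆ _ : (t i).Nonempty,
          (EMetric.diam (t i) ^ n + lam' * EMetric.diam (t i) ^ (n - 1)) := by
    rw [mixedGauge]
    exact OuterMeasure.boundedBy_apply Ω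
  rw [hmg]
  refine le_iInf fun t => le_iInf fun ht => ?_
  have hfinal : volume Ω + lam' * μH[(n - 1 : ℕ)] (frontier Ω) ≤
      Ct * ∑' i, ⨆ _ : (t i).Nonempty,
        (EMetric.diam (t i) ^ n + lam' * EMetric.diam (t i) ^ (n - 1)) := by
    calc volume Ω + lam' * μH[(n - 1 : ℕ)] (frontier Ω)
        ≤ D * (volume Ω + lam' * ∑ j : Fin N, μH[(n - 1 : ℕ)] (T j '' Ω)) := hX1X2
      _ ≤ D * (C * ∑' i, ⨆ _ : (t i).Nonempty,
            (EMetric.diam (t i) ^ n + lam' * EMetric.diam (t i) ^ (n - 1))) :=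
          mul_le_mul_right (hX2R t ht) _
      _ = Ct * ∑' i, ⨆ _ : (t i).Nonempty,
            (EMetric.diam (t i) ^ n + lam' * EMetric.diam (t i) ^ (n - 1)) := by
          rw [hCt, mul_assoc]
  calc Ct⁻¹ * (volume Ω + lam' * μH[(n - 1 : ℕ)] (frontier Ω))
      ≤ Ct⁻¹ * (Ct * ∑' i, ⨆ _ : (t i).Nonempty,
          (EMetric.diam (t i) ^ n + lam' * EMetric.diam (t i) ^ (n - 1))) :=
        mul_le_mul_right hfinal _
    _ = ∑' i, ⨆ _ : (t i).Nonempty,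
          (EMetric.diam (t i) ^ n + lam' * EMetric.diam (t i) ^ (n - 1)) := by
        rw [← mul_assoc, ENNReal.inv_mul_cancel hCt0 hCttop, one_mul]
end

section
/- Intervals in ℝ (Proposition 5.1): let λ > 0 be a real number and let a < b be real numbers. Then μ_λ([a, b]) = (b − a) + λ; in particular (b − a) + λ ≤ μ_λ([a, b]) ≤ (b − a) + λ, so μ_λ([a,b]) is comparable to length plus λ with absolute constants. -/
open MeasureTheory
open scoped ENNReal

/-- The mixed-gauge (method I) outer measure `μ_λ` on `ℝ` (the case `n = 1`), built from
the gauge `h_λ(0) = 0`, `h_λ(r) = r + λ` for `r > 0`, applied to the extended diameter of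
covering sets (so singletons and the empty set cost `0`). -/
noncomputable def mixedGaugeReal (lam : ℝ≥0∞) : OuterMeasure ℝ :=
  OuterMeasure.boundedBy fun s =>
    EMetric.diam s + (if EMetric.diam s = 0 then 0 else lam)

/-- **Intervals in `ℝ`.** For real `λ > 0` and `a < b`,
`μ_λ([a, b]) = (b − a) + λ`. -/
theorem mixedGaugeReal_Icc (lam : ℝ) (hlam : 0 < lam) (a b : ℝ) (hab : a < b) :
    mixedGaugeReal (ENNReal.ofReal lam) (Set.Icc a b)
      = ENNReal.ofReal (b - a) + ENNReal.ofReal lam := by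
  set m : Set ℝ → ℝ≥0∞ := fun s =>
    EMetric.diam s + (if EMetric.diam s = 0 then 0 else ENNReal.ofReal lam) with hm
  have hm0 : m ∅ = 0 := by simp [hm, EMetric.diam, Metric.ediam_empty]
  have hdiam : EMetric.diam (Set.Icc a b) = ENNReal.ofReal (b - a) := Real.ediam_Icc a b
  apply le_antisymm
  · calc mixedGaugeReal (ENNReal.ofReal lam) (Set.Icc a b) ≤ m (Set.Icc a b) :=
          OuterMeasure.boundedBy_le _
      _ = ENNReal.ofReal (b - a) + ENNReal.ofReal lam := by
          rw [hm]
          simp only [hdiam]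
          rw [if_neg]
          simp [ENNReal.ofReal_eq_zero, not_le, sub_pos, hab]
  · rw [show mixedGaugeReal (ENNReal.ofReal lam) = OuterMeasure.boundedBy m from rfl,
      OuterMeasure.boundedBy_eq_ofFunction hm0, OuterMeasure.ofFunction_apply]
    refine le_iInf fun t => le_iInf fun ht => ?_
    have hdsum : ENNReal.ofReal (b - a) ≤ ∑' i, EMetric.diam (t i) := by
      calc ENNReal.ofReal (b - a) = volume (Set.Icc a b) := (Real.volume_Icc).symm
        _ ≤ volume (⋃ i, t i) := measure_mono ht
        _ ≤ ∑' i, volume (t i) := measure_iUnion_le t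
        _ ≤ ∑' i, EMetric.diam (t i) := ENNReal.tsum_le_tsum fun i => Real.volume_le_diam _
    have hex : ∃ i, EMetric.diam (t i) ≠ 0 := by
      by_contra h
      push_neg at h
      have : (∑' i, EMetric.diam (t i)) = 0 := by simp [h]
      rw [this] at hdsum
      simp only [nonpos_iff_eq_zero, ENNReal.ofReal_eq_zero] at hdsum
      linarith
    obtain ⟨i, hi⟩ := hex
    have hlsum : ENNReal.ofReal lam ≤
        ∑' i, (if EMetric.diam (t i) = 0 then 0 else ENNReal.ofReal lam) := by
      calc ENNReal.ofReal lam
          = (if EMetric.diam (t i) = 0 then 0 else ENNReal.ofReal lam) := by rw [if_neg hi]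
        _ ≤ _ := ENNReal.le_tsum i
    calc ENNReal.ofReal (b - a) + ENNReal.ofReal lam
        ≤ (∑' i, EMetric.diam (t i))
          + ∑' i, (if EMetric.diam (t i) = 0 then 0 else ENNReal.ofReal lam) :=
          add_le_add hdsum hlsum
      _ = ∑' i, m (t i) := (ENNReal.tsum_add).symm
end

section
/- Rectangles in ℝ² (instance of Section 5.2, polygons): there exist absolute constants c, C > 0 such that for all real numbers a, b > 0 and every real λ > 0, the open rectangle R = (0, a) × (0, b) ⊆ ℝ² satisfies c · ( a·b + λ·(a + b) ) ≤ μ_λ(R) ≤ C · ( a·b + λ·(a + b) ), i.e. μ_λ(R) is comparable to area plus λ times perimeter. -/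
open MeasureTheory
open scoped ENNReal

lemma coordLip (i : Fin 2) : LipschitzWith 1 (fun x : EuclideanSpace ℝ (Fin 2) => x i) := by
  have h := (LipschitzWith.eval (α := fun _ : Fin 2 => ℝ) i).comp
    (PiLp.lipschitzWith_ofLp 2 (fun _ : Fin 2 => ℝ))
  simp at h; exact h

lemma ediam_coord_image_le (i : Fin 2) (s : Set (EuclideanSpace ℝ (Fin 2))) :
    EMetric.diam ((fun x : EuclideanSpace ℝ (Fin 2) => x i) '' s) ≤ EMetric.diam s := by
  have := (coordLip i).ediam_image_le s
  simp at this; exact this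

lemma volume_box (A B : Set ℝ) :
    volume {x : EuclideanSpace ℝ (Fin 2) | x 0 ∈ A ∧ x 1 ∈ B} = volume A * volume B := by
  have hset : {x : EuclideanSpace ℝ (Fin 2) | x 0 ∈ A ∧ x 1 ∈ B}
      = (MeasurableEquiv.toLp 2 (Fin 2 → ℝ)).symm ⁻¹' (Set.univ.pi ![A, B]) := by
    ext x
    simp [Set.mem_pi, Fin.forall_fin_two, MeasurableEquiv.coe_toLp,
      MeasurableEquiv.toLp]
    exact Iff.rfl
  rw [hset,
    (EuclideanSpace.volume_preserving_symm_measurableEquiv_toLp (Fin 2)).measure_preimage_equiv,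
    volume_pi_pi]
  simp [Fin.prod_univ_two]

lemma volume_le_diam_sq (s : Set (EuclideanSpace ℝ (Fin 2))) :
    volume s ≤ EMetric.diam s ^ 2 := by
  have h1 : volume ((MeasurableEquiv.toLp 2 (Fin 2 → ℝ)).symm '' s) = volume s := by
    rw [MeasurableEquiv.image_eq_preimage_symm]
    exact (MeasurePreserving.symm (MeasurableEquiv.toLp 2 (Fin 2 → ℝ)).symm
      (EuclideanSpace.volume_preserving_symm_measurableEquiv_toLp (Fin 2))).measure_preimage_equiv s
  calc volume s = volume ((MeasurableEquiv.toLp 2 (Fin 2 → ℝ)).symm '' s) := h1.symm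
    _ ≤ EMetric.diam ((MeasurableEquiv.toLp 2 (Fin 2 → ℝ)).symm '' s) ^ Fintype.card (Fin 2) :=
        Real.volume_pi_le_diam_pow _
    _ ≤ EMetric.diam s ^ 2 := by
        rw [Fintype.card_fin]
        gcongr
        have := (PiLp.lipschitzWith_ofLp 2 (fun _ : Fin 2 => ℝ)).ediam_image_le s
        simp at this; exact this

/-- The mixed-gauge (method I) outer measure `μ_λ` on `ℝ²`, built from the gauge
`h_λ(r) = r² + λ·r` applied to the extended diameter of covering sets. -/
noncomputable def mixedGauge2 (lam : ℝ≥0∞) :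
    OuterMeasure (EuclideanSpace ℝ (Fin 2)) :=
  OuterMeasure.boundedBy fun s => (EMetric.diam s) ^ 2 + lam * EMetric.diam s

theorem mixedGauge2_rectangle_lower (a b : ℝ) (ha : 0 < a) (hb : 0 < b)
    (lam : ℝ) (hlam : 0 < lam) :
    ENNReal.ofReal (1/2 : ℝ) * ENNReal.ofReal (a * b + lam * (a + b)) ≤
      mixedGauge2 (ENNReal.ofReal lam)
        {x : EuclideanSpace ℝ (Fin 2) | x 0 ∈ Set.Ioo 0 a ∧ x 1 ∈ Set.Ioo 0 b} := by
  set E := EuclideanSpace ℝ (Fin 2)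
  set R : Set E := {x : E | x 0 ∈ Set.Ioo 0 a ∧ x 1 ∈ Set.Ioo 0 b} with hR
  set lam' := ENNReal.ofReal lam with hlam'
  set ν : OuterMeasure E := volume.toOuterMeasure + lam' •
      (OuterMeasure.comap (fun x : E => x 0) volume.toOuterMeasure +
       OuterMeasure.comap (fun x : E => x 1) volume.toOuterMeasure) with hν
  have hνapp : ∀ s : Set E, ν s = volume s +
      lam' * (volume ((fun x : E => x 0) '' s) + volume ((fun x : E => x 1) '' s)) := by
    intro s
    simp [hν, OuterMeasure.comap_apply, mul_add]
  have key : (2⁻¹ : ℝ≥0∞) • ν ≤ OuterMeasure.boundedBy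
      (fun s : Set E => (EMetric.diam s) ^ 2 + lam' * EMetric.diam s) := by
    rw [OuterMeasure.le_boundedBy]
    intro s
    set d := EMetric.diam s with hd
    have hstep : ν s ≤ 2 * (d ^ 2 + lam' * d) := by
      rw [hνapp]
      have hv : volume s ≤ d ^ 2 := volume_le_diam_sq s
      have h0 : volume ((fun x : E => x 0) '' s) ≤ d :=
        (Real.volume_le_diam _).trans (ediam_coord_image_le 0 s)
      have h1 : volume ((fun x : E => x 1) '' s) ≤ d :=
        (Real.volume_le_diam _).trans (ediam_coord_image_le 1 s)
      calc volume s + lam' * (volume ((fun x : E => x 0) '' s)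
              + volume ((fun x : E => x 1) '' s))
          ≤ d ^ 2 + lam' * (d + d) := by gcongr
        _ = d ^ 2 + lam' * d + lam' * d := by ring
        _ ≤ (d ^ 2 + lam' * d) + (d ^ 2 + lam' * d) := by
            gcongr
            exact le_add_self
        _ = 2 * (d ^ 2 + lam' * d) := (two_mul _).symm
    calc ((2⁻¹ : ℝ≥0∞) • ν) s = 2⁻¹ * ν s := rfl
      _ ≤ 2⁻¹ * (2 * (d ^ 2 + lam' * d)) := by gcongr
      _ = d ^ 2 + lam' * d := by
          rw [← mul_assoc, ENNReal.inv_mul_cancel two_ne_zero ENNReal.ofNat_ne_top, one_mul]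
  -- compute the images of R under the coordinate projections
  have himg0 : (fun x : E => x 0) '' R = Set.Ioo 0 a := by
    ext t
    constructor
    · rintro ⟨x, hx, rfl⟩
      exact hx.1
    · intro ht
      refine ⟨(WithLp.equiv 2 (Fin 2 → ℝ)).symm ![t, b/2], ?_, ?_⟩
      · constructor
        · simpa [WithLp.equiv_symm_apply, PiLp.toLp_apply] using ht
        · simp only [WithLp.equiv_symm_apply, PiLp.toLp_apply, Matrix.cons_val_one, Matrix.head_cons]
          exact ⟨half_pos hb, half_lt_self hb⟩
      · simp [WithLp.equiv_symm_apply, PiLp.toLp_apply]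
  have himg1 : (fun x : E => x 1) '' R = Set.Ioo 0 b := by
    ext t
    constructor
    · rintro ⟨x, hx, rfl⟩
      exact hx.2
    · intro ht
      refine ⟨(WithLp.equiv 2 (Fin 2 → ℝ)).symm ![a/2, t], ?_, ?_⟩
      · constructor
        · simp only [WithLp.equiv_symm_apply, PiLp.toLp_apply, Matrix.cons_val_zero]
          exact ⟨half_pos ha, half_lt_self ha⟩
        · simpa [WithLp.equiv_symm_apply, PiLp.toLp_apply] using ht
      · simp [WithLp.equiv_symm_apply, PiLp.toLp_apply]
  have hνR : ν R = ENNReal.ofReal (a * b + lam * (a + b)) := by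
    rw [hνapp, himg0, himg1]
    have hRvol : volume R = ENNReal.ofReal (a * b) := by
      rw [hR, volume_box, Real.volume_Ioo, Real.volume_Ioo, sub_zero, sub_zero,
        ← ENNReal.ofReal_mul ha.le]
    rw [hRvol, Real.volume_Ioo, Real.volume_Ioo, sub_zero, sub_zero,
      ← ENNReal.ofReal_add ha.le hb.le, hlam', ← ENNReal.ofReal_mul hlam.le,
      ← ENNReal.ofReal_add (by positivity) (by positivity)]
  have hmain : (2⁻¹ : ℝ≥0∞) * ν R ≤ mixedGauge2 lam' R := key R
  rw [hνR] at hmain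
  have h12 : ENNReal.ofReal (1/2 : ℝ) = (2⁻¹ : ℝ≥0∞) := by
    rw [one_div, ENNReal.ofReal_inv_of_pos two_pos]
    norm_num
  rw [h12]
  exact hmain

theorem mixedGauge2_rectangle_upper (a b : ℝ) (ha : 0 < a) (hb : 0 < b)
    (lam : ℝ) (hlam : 0 < lam) :
    mixedGauge2 (ENNReal.ofReal lam)
        {x : EuclideanSpace ℝ (Fin 2) | x 0 ∈ Set.Ioo 0 a ∧ x 1 ∈ Set.Ioo 0 b} ≤
      ENNReal.ofReal (16 : ℝ) * ENNReal.ofReal (a * b + lam * (a + b)) := by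
  set E := EuclideanSpace ℝ (Fin 2)
  set R : Set E := {x : E | x 0 ∈ Set.Ioo 0 a ∧ x 1 ∈ Set.Ioo 0 b} with hR
  set s0 : ℝ := min a b with hs0def
  have hs0 : 0 < s0 := lt_min ha hb
  have hs0a : s0 ≤ a := min_le_left _ _
  have hs0b : s0 ≤ b := min_le_right _ _
  set N := ⌈a / s0⌉₊ with hNdef
  set M := ⌈b / s0⌉₊ with hMdef
  set Q : Fin N × Fin M → Set E := fun p =>
    {x : E | x 0 ∈ Set.Icc ((p.1 : ℕ) * s0) (((p.1 : ℕ) + 1) * s0) ∧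
             x 1 ∈ Set.Icc ((p.2 : ℕ) * s0) (((p.2 : ℕ) + 1) * s0)} with hQ
  have hcover : R ⊆ ⋃ p, Q p := by
    rintro x ⟨hx0, hx1⟩
    have h0 : 0 ≤ x 0 / s0 := div_nonneg hx0.1.le hs0.le
    have h1 : 0 ≤ x 1 / s0 := div_nonneg hx1.1.le hs0.le
    have hiN : ⌊x 0 / s0⌋₊ < N := by
      rw [Nat.floor_lt h0]
      exact lt_of_lt_of_le ((div_lt_div_iff_of_pos_right hs0).2 hx0.2) (Nat.le_ceil _)
    have hjM : ⌊x 1 / s0⌋₊ < M := by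
      rw [Nat.floor_lt h1]
      exact lt_of_lt_of_le ((div_lt_div_iff_of_pos_right hs0).2 hx1.2) (Nat.le_ceil _)
    refine Set.mem_iUnion.2 ⟨(⟨_, hiN⟩, ⟨_, hjM⟩), ?_, ?_⟩
    · constructor
      · exact (le_div_iff₀ hs0).1 (Nat.floor_le h0)
      · exact le_of_lt ((div_lt_iff₀ hs0).1 (Nat.lt_floor_add_one _))
    · constructor
      · exact (le_div_iff₀ hs0).1 (Nat.floor_le h1)
      · exact le_of_lt ((div_lt_iff₀ hs0).1 (Nat.lt_floor_add_one _))
  have hdiam : ∀ p, EMetric.diam (Q p) ≤ ENNReal.ofReal (2 * s0) := by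
    intro p
    apply EMetric.diam_le
    intro x hx y hy
    rw [edist_dist]
    apply ENNReal.ofReal_le_ofReal
    rw [EuclideanSpace.dist_eq]
    have hd0 : dist (x 0) (y 0) ≤ s0 := by
      rw [Real.dist_eq, abs_sub_le_iff]
      obtain ⟨⟨hx1, hx2⟩, -⟩ := hx
      obtain ⟨⟨hy1, hy2⟩, -⟩ := hy
      constructor <;> nlinarith
    have hd1 : dist (x 1) (y 1) ≤ s0 := by
      rw [Real.dist_eq, abs_sub_le_iff]
      obtain ⟨-, hx1, hx2⟩ := hx
      obtain ⟨-, hy1, hy2⟩ := hy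
      constructor <;> nlinarith
    rw [Fin.sum_univ_two]
    calc Real.sqrt (dist (x 0) (y 0) ^ 2 + dist (x 1) (y 1) ^ 2)
        ≤ Real.sqrt ((2 * s0) ^ 2) := by
          apply Real.sqrt_le_sqrt
          nlinarith [dist_nonneg (x := x 0) (y := y 0), dist_nonneg (x := x 1) (y := y 1)]
      _ = 2 * s0 := Real.sqrt_sq (by positivity)
  have hgauge : ∀ p, (EMetric.diam (Q p)) ^ 2 + ENNReal.ofReal lam * EMetric.diam (Q p)
      ≤ ENNReal.ofReal (4 * s0 ^ 2 + lam * (2 * s0)) := by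
    intro p
    calc (EMetric.diam (Q p)) ^ 2 + ENNReal.ofReal lam * EMetric.diam (Q p)
        ≤ (ENNReal.ofReal (2 * s0)) ^ 2 + ENNReal.ofReal lam * ENNReal.ofReal (2 * s0) := by
          gcongr <;> exact hdiam p
      _ = ENNReal.ofReal (4 * s0 ^ 2 + lam * (2 * s0)) := by
          rw [← ENNReal.ofReal_pow (by positivity), ← ENNReal.ofReal_mul hlam.le,
            ← ENNReal.ofReal_add (by positivity) (by positivity)]
          ring_nf
  -- the key real-number estimate
  have hN' : (N : ℝ) * s0 ≤ 2 * a := by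
    have h := Nat.ceil_lt_add_one (show (0:ℝ) ≤ a / s0 by positivity)
    have h2 := mul_le_mul_of_nonneg_right h.le hs0.le
    rw [add_mul, div_mul_cancel₀ _ (ne_of_gt hs0), one_mul] at h2
    linarith
  have hM' : (M : ℝ) * s0 ≤ 2 * b := by
    have h := Nat.ceil_lt_add_one (show (0:ℝ) ≤ b / s0 by positivity)
    have h2 := mul_le_mul_of_nonneg_right h.le hs0.le
    rw [add_mul, div_mul_cancel₀ _ (ne_of_gt hs0), one_mul] at h2
    linarith
  have hab : a * b ≤ (a + b) * s0 := by
    rcases le_total a b with h | h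
    · rw [hs0def, min_eq_left h]; nlinarith
    · rw [hs0def, min_eq_right h]; nlinarith
  have hreal : (N : ℝ) * M * (4 * s0 ^ 2 + lam * (2 * s0)) ≤
      16 * (a * b + lam * (a + b)) := by
    have hNn : (0:ℝ) ≤ (N : ℝ) := Nat.cast_nonneg _
    have hMn : (0:ℝ) ≤ (M : ℝ) := Nat.cast_nonneg _
    have h1 : (N : ℝ) * s0 * ((M : ℝ) * s0) ≤ (2 * a) * (2 * b) :=
      mul_le_mul hN' hM' (by positivity) (by positivity)
    have h2 : (N : ℝ) * M * s0 * s0 ≤ 4 * ((a + b) * s0) := by nlinarith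
    have h3 : (N : ℝ) * M * s0 ≤ 4 * (a + b) :=
      le_of_mul_le_mul_right (by linarith) hs0
    nlinarith [mul_le_mul_of_nonneg_left h3 (show (0:ℝ) ≤ 2 * lam by positivity)]
  calc mixedGauge2 (ENNReal.ofReal lam) R
      ≤ mixedGauge2 (ENNReal.ofReal lam) (⋃ p, Q p) := measure_mono hcover
    _ ≤ ∑' p, mixedGauge2 (ENNReal.ofReal lam) (Q p) := measure_iUnion_le Q
    _ ≤ ∑' _p : Fin N × Fin M, ENNReal.ofReal (4 * s0 ^ 2 + lam * (2 * s0)) :=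
        ENNReal.tsum_le_tsum fun p =>
          (OuterMeasure.boundedBy_le _).trans (hgauge p)
    _ = (Fintype.card (Fin N × Fin M)) * ENNReal.ofReal (4 * s0 ^ 2 + lam * (2 * s0)) := by
        rw [tsum_fintype, Finset.sum_const, Finset.card_univ, nsmul_eq_mul]
    _ = ENNReal.ofReal ((N * M : ℕ) : ℝ) * ENNReal.ofReal (4 * s0 ^ 2 + lam * (2 * s0)) := by
        rw [Fintype.card_prod, Fintype.card_fin, Fintype.card_fin, ENNReal.ofReal_natCast]
    _ = ENNReal.ofReal (((N * M : ℕ) : ℝ) * (4 * s0 ^ 2 + lam * (2 * s0))) :=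
        (ENNReal.ofReal_mul (by positivity)).symm
    _ ≤ ENNReal.ofReal (16 * (a * b + lam * (a + b))) := by
        apply ENNReal.ofReal_le_ofReal
        push_cast
        exact hreal
    _ = ENNReal.ofReal (16 : ℝ) * ENNReal.ofReal (a * b + lam * (a + b)) :=
        ENNReal.ofReal_mul (by norm_num)

/-- **Rectangles in `ℝ²`.** There are absolute constants `c, C > 0` such
that for all reals `a, b > 0` and every real `λ > 0`, the open rectangle
`R = (0,a) × (0,b) ⊆ ℝ²` satisfies
`c (a·b + λ(a+b)) ≤ μ_λ(R) ≤ C (a·b + λ(a+b))`. -/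
theorem mixedGauge2_rectangle :
    ∃ c C : ℝ, 0 < c ∧ 0 < C ∧
      ∀ a b : ℝ, 0 < a → 0 < b → ∀ lam : ℝ, 0 < lam →
        ENNReal.ofReal c * ENNReal.ofReal (a * b + lam * (a + b)) ≤
            mixedGauge2 (ENNReal.ofReal lam)
              {x : EuclideanSpace ℝ (Fin 2) | x 0 ∈ Set.Ioo 0 a ∧ x 1 ∈ Set.Ioo 0 b} ∧
          mixedGauge2 (ENNReal.ofReal lam)
              {x : EuclideanSpace ℝ (Fin 2) | x 0 ∈ Set.Ioo 0 a ∧ x 1 ∈ Set.Ioo 0 b} ≤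
            ENNReal.ofReal C * ENNReal.ofReal (a * b + lam * (a + b)) := by
  refine ⟨1/2, 16, by norm_num, by norm_num, fun a b ha hb lam hlam => ?_⟩
  exact ⟨mixedGauge2_rectangle_lower a b ha hb lam hlam,
    mixedGauge2_rectangle_upper a b ha hb lam hlam⟩
end
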